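/- arXiv:1411.0522 — 3 statements merged into one kernel-verified Lean document; each statement's English description precedes it below -/
import Mathlib

section
/- For every positive integer k, the graph P_k obtained from a path with k edges by adding k−1 parallel copies of each edge is k-edge-connected but contains no strong immersion of K_3. -/
open scoped Classical

/-- A multigraph: possibly parallel edges and loops, given by source/target maps
(the orientation is irrelevant; walks may traverse edges in either direction). -/
structure Multigraph (V : Type*) (E : Type*) where
  src : E → V
  tgt : E → V

namespace Multigraph

variable {V E V' E' : Type*}

/-- Walks in a multigraph, traversing edges in either direction. -/
inductive Walk (G : Multigraph V E) : V → V → Type _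
  | nil (v : V) : Walk G v v
  | cons {u v w : V} (e : E) (hs : G.src e = u) (ht : G.tgt e = v) (p : Walk G v w) : Walk G u w
  | cons' {u v w : V} (e : E) (hs : G.src e = v) (ht : G.tgt e = u) (p : Walk G v w) : Walk G u w

def Walk.edges {G : Multigraph V E} : ∀ {u v : V}, G.Walk u v → List E
  | _, _, .nil _ => []
  | _, _, .cons e _ _ p => e :: p.edges
  | _, _, .cons' e _ _ p => e :: p.edges

def Walk.support {G : Multigraph V E} : ∀ {u v : V}, G.Walk u v → List V
  | u, _, .nil _ => [u]
  | u, _, .cons _ _ _ p => u :: p.support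
  | u, _, .cons' _ _ _ p => u :: p.support

/-- An edge is incident with a vertex. -/
def Inc (G : Multigraph V E) (e : E) (v : V) : Prop := G.src e = v ∨ G.tgt e = v

/-- The end of an edge other than `v`. -/
noncomputable def otherEnd (G : Multigraph V E) (v : V) (e : E) : V :=
  if G.src e = v then G.tgt e else G.src e

lemma otherEnd_ne (G : Multigraph V E) {v : V} {e : E} (hinc : G.Inc e v)
    (hnl : ¬ (G.src e = v ∧ G.tgt e = v)) : G.otherEnd v e ≠ v := by
  unfold otherEnd
  split_ifs with h
  · exact fun ht => hnl ⟨h, ht⟩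
  · exact fun hs => (hinc.elim h (fun ht => h (by
      exact absurd hs (fun hs' => h hs')))) |>.elim
  
/-- Degree of a vertex (each loop counts twice). -/
noncomputable def degree (G : Multigraph V E) (v : V) : ℕ :=
  Set.ncard {e | G.src e = v} + Set.ncard {e | G.tgt e = v}

/-- The edge cut determined by a vertex set `S`: edges with exactly one end in `S`. -/
def cutEdges (G : Multigraph V E) (S : Set V) : Set E :=
  {e | (G.src e ∈ S ∧ G.tgt e ∉ S) ∨ (G.src e ∉ S ∧ G.tgt e ∈ S)}

/-- A set `W` is `k`-edge-connected in `G`: no edge cut of size `< k` separates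
two vertices of `W`. -/
def EdgeConnSet (G : Multigraph V E) (k : ℕ) (W : Set V) : Prop :=
  ∀ S : Set V, (G.cutEdges S).ncard < k → ∀ x ∈ W, ∀ y ∈ W, (x ∈ S ↔ y ∈ S)

/-- There exist `k` pairwise edge-disjoint paths (trails) from `u` to `v`. -/
def EDWalks (G : Multigraph V E) (u v : V) (k : ℕ) : Prop :=
  ∃ P : Fin k → G.Walk u v, (∀ i, (P i).edges.Nodup) ∧
    ∀ i j, i ≠ j → ∀ e ∈ (P i).edges, e ∉ (P j).edges

/-- The neighbourhood of `v`: vertices other than `v` joined to `v` by an edge. -/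
def nbhd (G : Multigraph V E) (v : V) : Set V :=
  {u | u ≠ v ∧ ∃ e, (G.src e = v ∧ G.tgt e = u) ∨ (G.src e = u ∧ G.tgt e = v)}

/-- A strong immersion of `H` in `G`. -/
structure StrongImm (H : Multigraph V' E') (G : Multigraph V E) where
  vmap : V' → V
  vinj : Function.Injective vmap
  path : ∀ e : E', G.Walk (vmap (H.src e)) (vmap (H.tgt e))
  edges_nodup : ∀ e, (path e).edges.Nodup
  edisj : ∀ e f, e ≠ f → ∀ x ∈ (path e).edges, x ∉ (path f).edges
  avoid : ∀ (e : E') (u : V'), u ≠ H.src e → u ≠ H.tgt e → vmap u ∉ (path e).support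

def StrongImmersion (H : Multigraph V' E') (G : Multigraph V E) : Prop :=
  Nonempty (StrongImm H G)

/-- A weak immersion of `H` in `G`. -/
structure WeakImm (H : Multigraph V' E') (G : Multigraph V E) where
  vmap : V' → V
  vinj : Function.Injective vmap
  path : ∀ e : E', G.Walk (vmap (H.src e)) (vmap (H.tgt e))
  edges_nodup : ∀ e, (path e).edges.Nodup
  edisj : ∀ e f, e ≠ f → ∀ x ∈ (path e).edges, x ∉ (path f).edges

def WeakImmersion (H : Multigraph V' E') (G : Multigraph V E) : Prop :=
  Nonempty (WeakImm H G)

/-- The complete graph `K n` as a multigraph. -/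
def completeMG (n : ℕ) : Multigraph (Fin n) {p : Fin n × Fin n // p.1 < p.2} :=
  ⟨fun p => p.1.1, fun p => p.1.2⟩

/-- A path-like decomposition of the part of `G` induced on `S`, with respect to
an ordered set `X ⊆ S`: an ordering of `X` and a near-partition of `S \ X` into bags. -/
structure PathLikeDecomp (G : Multigraph V E) (S : Set V) (X : Set V) where
  t : ℕ
  ord : Fin t → V
  ord_inj : Function.Injective ord
  ord_range : Set.range ord = X
  bag : Fin (t + 1) → Set V
  bag_disj : ∀ i j, i ≠ j → Disjoint (bag i) (bag j)
  bag_union : (⋃ i, bag i) = S \ X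

namespace PathLikeDecomp

variable {G : Multigraph V E} {S X : Set V} (P : PathLikeDecomp G S X)

/-- Vertices strictly to the left of the `i`-th ordered vertex. -/
def leftSet (i : Fin P.t) : Set V :=
  {v | ∃ j, j < i ∧ v = P.ord j} ∪ ⋃ (j : Fin (P.t + 1)) (_ : (j : ℕ) ≤ (i : ℕ)), P.bag j

/-- Vertices strictly to the right of the `i`-th ordered vertex. -/
def rightSet (i : Fin P.t) : Set V :=
  {v | ∃ j, i < j ∧ v = P.ord j} ∪ ⋃ (j : Fin (P.t + 1)) (_ : (i : ℕ) < (j : ℕ)), P.bag j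

/-- The `x_i`-cut of the decomposition. -/
def cutAt (i : Fin P.t) : Set E :=
  {e | (G.src e ∈ P.leftSet i ∧ G.tgt e ∈ P.rightSet i) ∨
       (G.src e ∈ P.rightSet i ∧ G.tgt e ∈ P.leftSet i)}

/-- The decomposition has width less than `w`. -/
def WidthLt (w : ℕ) : Prop := ∀ i, (P.cutAt i).ncard < w

/-- A set `Z` is `p`-bounded in the decomposition. -/
def Bounded (p : ℕ) (Z : Set V) : Prop :=
  (X ∩ Z).ncard + Set.ncard {j : Fin (P.t + 1) | (P.bag j ∩ Z).Nonempty} ≤ p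

end PathLikeDecomp

/-- `W` is `(a,w,p)`-linear in `G`. -/
def Linear (G : Multigraph V E) (W : Set V) (a w p : ℕ) : Prop :=
  ∃ A : Set V, A ⊆ W ∧ A.ncard ≤ a ∧
    ∃ P : PathLikeDecomp G {v | v ∉ A} (W \ A), P.WidthLt w ∧
      ∀ v ∈ A, P.Bounded p (G.nbhd v)

/-- A graph is `α`-basic if the set of its vertices of degree at least `α` is `α`-linear. -/
def Basic (G : Multigraph V E) (α : ℕ) : Prop :=
  Linear G {v | α ≤ G.degree v} α α α

/-- A tree-cut decomposition of `G` indexed by a tree on `τ`. -/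
structure TreeCutDecomp (G : Multigraph V E) (τ : Type*) where
  tree : SimpleGraph τ
  tree_isTree : tree.IsTree
  bag : τ → Set V
  bag_disj : ∀ i j, i ≠ j → Disjoint (bag i) (bag j)
  bag_union : (⋃ i, bag i) = Set.univ

namespace TreeCutDecomp

variable {τ : Type*} {G : Multigraph V E} (D : TreeCutDecomp G τ)

/-- The union of the bags on the `v`-side of the tree edge `uv`. -/
def sideVerts (u v : τ) : Set V :=
  ⋃ (x : τ) (_ : (D.tree.deleteEdges {s(u, v)}).Reachable v x), D.bag x

/-- The edge cut of `G` determined by the tree edge `uv`. -/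
def edgeCut (u v : τ) : Set E := G.cutEdges (D.sideVerts u v)

/-- The adhesion of the decomposition. -/
noncomputable def adhesion : ℕ :=
  sSup {n | ∃ u v, D.tree.Adj u v ∧ n = (D.edgeCut u v).ncard}

/-- The decomposition has adhesion less than `α`. -/
def AdhesionLt (α : ℕ) : Prop := ∀ u v, D.tree.Adj u v → (D.edgeCut u v).ncard < α

lemma exists_bag (v : V) : ∃ t, v ∈ D.bag t :=
  Set.mem_iUnion.mp (D.bag_union.symm ▸ Set.mem_univ v)

/-- The tree node whose bag contains `v`. -/
noncomputable def nodeOf (v : V) : τ := (D.exists_bag v).choose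

lemma nodeOf_mem (v : V) : v ∈ D.bag (D.nodeOf v) := (D.exists_bag v).choose_spec

/-- Connected components of the tree with node `t` removed. -/
def PeriphComp (t : τ) := (D.tree.induce {x : τ | x ≠ t}).ConnectedComponent

/-- Vertices of the torso at `t`: core vertices and peripheral vertices. -/
def TorsoV (t : τ) := {v : V // v ∈ D.bag t} ⊕ D.PeriphComp t

/-- The consolidation map onto the torso at `t`. -/
noncomputable def torsoProj (t : τ) (v : V) : D.TorsoV t :=
  if h : v ∈ D.bag t then Sum.inl ⟨v, h⟩
  else Sum.inr ((D.tree.induce {x : τ | x ≠ t}).connectedComponentMk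
    ⟨D.nodeOf v, fun he => h (he ▸ D.nodeOf_mem v)⟩)

/-- Edges of the torso at `t`: all edges except the loops created by consolidation. -/
def TorsoE (t : τ) :=
  {e : E // ∀ c : D.PeriphComp t,
    ¬ (D.torsoProj t (G.src e) = Sum.inr c ∧ D.torsoProj t (G.tgt e) = Sum.inr c)}

/-- The torso of the tree-cut decomposition at `t`. -/
noncomputable def torso (t : τ) : Multigraph (D.TorsoV t) (D.TorsoE t) :=
  ⟨fun e => D.torsoProj t (G.src e.1), fun e => D.torsoProj t (G.tgt e.1)⟩

end TreeCutDecomp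

/-- A witness that `G` is a `k`-edge sum of `G₁` and `G₂`. -/
structure EdgeSumWitness (G : Multigraph V E) {V₁ E₁ V₂ E₂ : Type*}
    (G₁ : Multigraph V₁ E₁) (G₂ : Multigraph V₂ E₂) (k : ℕ) where
  v₁ : V₁
  v₂ : V₂
  noloop₁ : ∀ e, ¬ (G₁.src e = v₁ ∧ G₁.tgt e = v₁)
  noloop₂ : ∀ e, ¬ (G₂.src e = v₂ ∧ G₂.tgt e = v₂)
  deg₁ : G₁.degree v₁ = k
  deg₂ : G₂.degree v₂ = k
  π : {e : E₁ // G₁.Inc e v₁} ≃ {e : E₂ // G₂.Inc e v₂}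
  φ : V ≃ ({x : V₁ // x ≠ v₁} ⊕ {x : V₂ // x ≠ v₂})
  ψ : E ≃ ({e : E₁ // ¬ G₁.Inc e v₁} ⊕ {e : E₂ // ¬ G₂.Inc e v₂} ⊕ {e : E₁ // G₁.Inc e v₁})
  ends₁ : ∀ (e : E) (e₁ : {e : E₁ // ¬ G₁.Inc e v₁}), ψ e = Sum.inl e₁ →
    s(G.src e, G.tgt e) =
      s(φ.symm (Sum.inl ⟨G₁.src e₁.1, fun h => e₁.2 (Or.inl h)⟩),
        φ.symm (Sum.inl ⟨G₁.tgt e₁.1, fun h => e₁.2 (Or.inr h)⟩))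
  ends₂ : ∀ (e : E) (e₂ : {e : E₂ // ¬ G₂.Inc e v₂}), ψ e = Sum.inr (Sum.inl e₂) →
    s(G.src e, G.tgt e) =
      s(φ.symm (Sum.inr ⟨G₂.src e₂.1, fun h => e₂.2 (Or.inl h)⟩),
        φ.symm (Sum.inr ⟨G₂.tgt e₂.1, fun h => e₂.2 (Or.inr h)⟩))
  ends_cross : ∀ (e : E) (e₁ : {e : E₁ // G₁.Inc e v₁}), ψ e = Sum.inr (Sum.inr e₁) →
    s(G.src e, G.tgt e) =
      s(φ.symm (Sum.inl ⟨G₁.otherEnd v₁ e₁.1, G₁.otherEnd_ne e₁.2 (noloop₁ e₁.1)⟩),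
        φ.symm (Sum.inr ⟨G₂.otherEnd v₂ (π e₁).1, G₂.otherEnd_ne (π e₁).2 (noloop₂ (π e₁).1)⟩))

/-- `G` is a `k`-edge sum of `G₁` and `G₂`. -/
def IsEdgeSum (G : Multigraph V E) {V₁ E₁ V₂ E₂ : Type*}
    (G₁ : Multigraph V₁ E₁) (G₂ : Multigraph V₂ E₂) (k : ℕ) : Prop :=
  Nonempty (EdgeSumWitness G G₁ G₂ k)

/-- A witness of an edge sum is grounded. -/
def EdgeSumWitness.Grounded {V₁ E₁ V₂ E₂ : Type*} {G : Multigraph V E}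
    {G₁ : Multigraph V₁ E₁} {G₂ : Multigraph V₂ E₂} {k : ℕ}
    (wit : EdgeSumWitness G G₁ G₂ k) : Prop :=
  (∃ v₁' : V₁, v₁' ≠ wit.v₁ ∧ G₁.EDWalks wit.v₁ v₁' k) ∧
  (∃ v₂' : V₂, v₂' ≠ wit.v₂ ∧ G₂.EDWalks wit.v₂ v₂' k)

/-- The graph obtained from `G` by consolidating the set `S` to a single vertex. -/
noncomputable def consolidate (G : Multigraph V E) (S : Set V) :
    Multigraph ({v : V // v ∉ S} ⊕ Unit) {e : E // ¬ (G.src e ∈ S ∧ G.tgt e ∈ S)} where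
  src := fun e => if h : G.src e.1 ∈ S then Sum.inr () else Sum.inl ⟨G.src e.1, h⟩
  tgt := fun e => if h : G.tgt e.1 ∈ S then Sum.inr () else Sum.inl ⟨G.tgt e.1, h⟩

/-- The auxiliary adjacency: `m` pairwise edge-disjoint `x`–`y` paths avoiding `W ∖ {x,y}`. -/
def auxAdj (G : Multigraph V E) (W : Set V) (m : ℕ) (x y : V) : Prop :=
  x ∈ W ∧ y ∈ W ∧ ∃ P : Fin m → G.Walk x y, (∀ i, (P i).edges.Nodup) ∧
    (∀ i j, i ≠ j → ∀ e ∈ (P i).edges, e ∉ (P j).edges) ∧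
    (∀ i, ∀ v ∈ (P i).support, v ∈ W → v = x ∨ v = y)

/-- The auxiliary simple graph `G(m, W)`. -/
def auxGraph (G : Multigraph V E) (W : Set V) (m : ℕ) : SimpleGraph V where
  Adj x y := x ≠ y ∧ (G.auxAdj W m x y ∨ G.auxAdj W m y x)
  symm := ⟨fun x y h => ⟨h.1.symm, h.2.symm⟩⟩
  loopless := ⟨fun x h => h.1 rfl⟩

end Multigraph

/-- `H` contains `K_{1,k}` as a minor: a centre branch set joined to `k` pairwise
disjoint branch sets, all inducing connected subgraphs. -/
def SimpleGraph.HasStarMinor {V : Type*} (H : SimpleGraph V) (k : ℕ) : Prop :=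
  ∃ C : Fin (k + 1) → Set V, (∀ i, (C i).Nonempty) ∧
    (∀ i, (H.induce (C i)).Connected) ∧
    (∀ i j, i ≠ j → Disjoint (C i) (C j)) ∧
    (∀ i, i ≠ 0 → ∃ u ∈ C 0, ∃ v ∈ C i, H.Adj u v)

namespace Multigraph

/-- The graph `P_k`: a path `0, 1, …, k` with each edge replaced by `k` parallel edges. -/
def pathPower (k : ℕ) : Multigraph (Fin (k + 1)) (Fin k × Fin k) :=
  ⟨fun e => e.1.castSucc, fun e => e.1.succ⟩

end Multigraph

lemma pathPower_walk_mem_support {k : ℕ} {a b : Fin (k + 1)}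
    (p : (Multigraph.pathPower k).Walk a b) (w : Fin (k + 1))
    (hw : ((a : ℕ) ≤ (w : ℕ) ∧ (w : ℕ) ≤ (b : ℕ)) ∨
      ((b : ℕ) ≤ (w : ℕ) ∧ (w : ℕ) ≤ (a : ℕ))) : w ∈ p.support := by
  induction p with
  | nil x =>
    have : w = x := Fin.ext (by omega)
    simp [Multigraph.Walk.support, this]
  | @cons a m b e hs ht p ih =>
    have hm : (m : ℕ) = (a : ℕ) + 1 := by
      rw [← hs, ← ht]; simp [Multigraph.pathPower]
    by_cases hwa : w = a
    · simp [Multigraph.Walk.support, hwa]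
    · have hne : (w : ℕ) ≠ (a : ℕ) := fun h => hwa (Fin.ext h)
      have cond : ((m : ℕ) ≤ (w : ℕ) ∧ (w : ℕ) ≤ (b : ℕ)) ∨
          ((b : ℕ) ≤ (w : ℕ) ∧ (w : ℕ) ≤ (m : ℕ)) := by omega
      simp only [Multigraph.Walk.support]
      exact List.mem_cons_of_mem _ (ih cond)
  | @cons' a m b e hs ht p ih =>
    have hm : (a : ℕ) = (m : ℕ) + 1 := by
      rw [← hs, ← ht]; simp [Multigraph.pathPower]
    by_cases hwa : w = a
    · simp [Multigraph.Walk.support, hwa]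
    · have hne : (w : ℕ) ≠ (a : ℕ) := fun h => hwa (Fin.ext h)
      have cond : ((m : ℕ) ≤ (w : ℕ) ∧ (w : ℕ) ≤ (b : ℕ)) ∨
          ((b : ℕ) ≤ (w : ℕ) ∧ (w : ℕ) ≤ (m : ℕ)) := by omega
      simp only [Multigraph.Walk.support]
      exact List.mem_cons_of_mem _ (ih cond)

/-- for every `k ≥ 1`, `P_k` is `k`-edge-connected but contains no
strong immersion of `K₃`. -/
theorem pathPower_edgeConnected_and_no_K3 (k : ℕ) (hk : 1 ≤ k) :
    (Multigraph.pathPower k).EdgeConnSet k Set.univ ∧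
      ¬ Multigraph.StrongImmersion (Multigraph.completeMG 3) (Multigraph.pathPower k) := by
  constructor
  · -- k-edge-connectivity
    intro S hS x _ y _
    -- Step A: S does not separate consecutive vertices
    have claim : ∀ i : Fin k, (i.castSucc ∈ S ↔ i.succ ∈ S) := by
      intro i
      by_contra hcon
      have hsub : (fun j : Fin k => (i, j)) '' Set.univ ⊆ (Multigraph.pathPower k).cutEdges S := by
        rintro e ⟨j, -, rfl⟩
        simp only [Multigraph.cutEdges, Multigraph.pathPower, Set.mem_setOf_eq]
        by_cases h1 : i.castSucc ∈ S
        · exact Or.inl ⟨h1, fun h2 => hcon ⟨fun _ => h2, fun _ => h1⟩⟩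
        · refine Or.inr ⟨h1, ?_⟩
          by_contra h2
          exact hcon ⟨fun h => absurd h h1, fun h => absurd h h2⟩
      have hinj : Function.Injective (fun j : Fin k => (i, j)) := by
        intro a b hab; simpa using hab
      have hcard : ((fun j : Fin k => (i, j)) '' Set.univ).ncard = k := by
        rw [Set.ncard_image_of_injective _ hinj, Set.ncard_univ]
        simp
      have := Set.ncard_le_ncard hsub (Set.toFinite _)
      omega
    -- Step B: S is constant
    have key : ∀ n : ℕ, ∀ h : n < k + 1, ((⟨n, h⟩ : Fin (k + 1)) ∈ S ↔ (⟨0, Nat.succ_pos k⟩ : Fin (k + 1)) ∈ S) := by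
      intro n
      induction n with
      | zero => intro h; rfl
      | succ m ihm =>
        intro h
        have hm : m < k := by omega
        have hc := claim ⟨m, hm⟩
        have e1 : (⟨m, hm⟩ : Fin k).castSucc = (⟨m, by omega⟩ : Fin (k + 1)) := rfl
        have e2 : (⟨m, hm⟩ : Fin k).succ = (⟨m + 1, h⟩ : Fin (k + 1)) := rfl
        rw [e1, e2] at hc
        exact hc.symm.trans (ihm (by omega))
    have hx := key x.1 x.2
    have hy := key y.1 y.2
    rw [Fin.eta] at hx hy
    exact hx.trans hy.symm
  · -- no strong immersion of K₃
    rintro ⟨imm⟩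
    set f := imm.vmap with hf
    have h01 : ((f 0 : Fin (k+1)) : ℕ) ≠ ((f 1 : Fin (k+1)) : ℕ) :=
      fun h => absurd (imm.vinj (Fin.ext h)) (by decide)
    have h02 : ((f 0 : Fin (k+1)) : ℕ) ≠ ((f 2 : Fin (k+1)) : ℕ) :=
      fun h => absurd (imm.vinj (Fin.ext h)) (by decide)
    have h12 : ((f 1 : Fin (k+1)) : ℕ) ≠ ((f 2 : Fin (k+1)) : ℕ) :=
      fun h => absurd (imm.vinj (Fin.ext h)) (by decide)
    obtain h | h | h :
        (((f 0 : Fin (k+1)) : ℕ) ≤ (f 2 : Fin (k+1)) ∧ ((f 2 : Fin (k+1)) : ℕ) ≤ (f 1 : Fin (k+1)) ∨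
         ((f 1 : Fin (k+1)) : ℕ) ≤ (f 2 : Fin (k+1)) ∧ ((f 2 : Fin (k+1)) : ℕ) ≤ (f 0 : Fin (k+1))) ∨
        (((f 0 : Fin (k+1)) : ℕ) ≤ (f 1 : Fin (k+1)) ∧ ((f 1 : Fin (k+1)) : ℕ) ≤ (f 2 : Fin (k+1)) ∨
         ((f 2 : Fin (k+1)) : ℕ) ≤ (f 1 : Fin (k+1)) ∧ ((f 1 : Fin (k+1)) : ℕ) ≤ (f 0 : Fin (k+1))) ∨
        (((f 1 : Fin (k+1)) : ℕ) ≤ (f 0 : Fin (k+1)) ∧ ((f 0 : Fin (k+1)) : ℕ) ≤ (f 2 : Fin (k+1)) ∨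
         ((f 2 : Fin (k+1)) : ℕ) ≤ (f 0 : Fin (k+1)) ∧ ((f 0 : Fin (k+1)) : ℕ) ≤ (f 1 : Fin (k+1)))
        := by omega
    · exact imm.avoid ⟨((0 : Fin 3), (1 : Fin 3)), by decide⟩ 2 (by decide) (by decide)
        (pathPower_walk_mem_support (imm.path ⟨((0 : Fin 3), (1 : Fin 3)), by decide⟩) (f 2) h)
    · exact imm.avoid ⟨((0 : Fin 3), (2 : Fin 3)), by decide⟩ 1 (by decide) (by decide)
        (pathPower_walk_mem_support (imm.path ⟨((0 : Fin 3), (2 : Fin 3)), by decide⟩) (f 1) h)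
    · exact imm.avoid ⟨((1 : Fin 3), (2 : Fin 3)), by decide⟩ 0 (by decide) (by decide)
        (pathPower_walk_mem_support (imm.path ⟨((1 : Fin 3), (2 : Fin 3)), by decide⟩) (f 0) h)
end

section
/- Let G be a graph and t a positive integer. If G contains a set X of t+1 vertices such that no two vertices of X are separated in G by an edge cut of size less than t², then G contains K_t as a weak immersion. -/
open scoped Classical

section MengerAux
namespace Multigraph
section WalkOps

variable {V E : Type*} {G : Multigraph V E}

def Walk.append : ∀ {u v w : V}, G.Walk u v → G.Walk v w → G.Walk u w
  | _, _, _, .nil _, q => q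
  | _, _, _, .cons e hs ht p, q => .cons e hs ht (p.append q)
  | _, _, _, .cons' e hs ht p, q => .cons' e hs ht (p.append q)

lemma Walk.edges_append : ∀ {u v w : V} (p : G.Walk u v) (q : G.Walk v w),
    (p.append q).edges = p.edges ++ q.edges
  | _, _, _, .nil _, _ => rfl
  | _, _, _, .cons e hs ht p, q => by
      simp [Walk.append, Walk.edges, Walk.edges_append p q]
  | _, _, _, .cons' e hs ht p, q => by
      simp [Walk.append, Walk.edges, Walk.edges_append p q]

def Walk.reverse : ∀ {u v : V}, G.Walk u v → G.Walk v u
  | _, _, .nil v => .nil v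
  | _, _, .cons e hs ht p => p.reverse.append (.cons' e hs ht (.nil _))
  | _, _, .cons' e hs ht p => p.reverse.append (.cons e hs ht (.nil _))

lemma Walk.edges_reverse : ∀ {u v : V} (p : G.Walk u v),
    p.reverse.edges = p.edges.reverse
  | _, _, .nil _ => rfl
  | _, _, .cons e hs ht p => by
      simp [Walk.reverse, Walk.edges_append, Walk.edges, Walk.edges_reverse p]
  | _, _, .cons' e hs ht p => by
      simp [Walk.reverse, Walk.edges_append, Walk.edges, Walk.edges_reverse p]

def Walk.wcast {u u' v : V} (h : u = u') (p : G.Walk u v) : G.Walk u' v := h ▸ p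

lemma Walk.edges_wcast {u u' v : V} (h : u = u') (p : G.Walk u v) :
    (p.wcast h).edges = p.edges := by subst h; rfl

end WalkOps
section Flow

variable {V E : Type*} [Fintype V] [Fintype E] (G : Multigraph V E)

noncomputable def flowDiv (f : E → ℤ) (x : V) : ℤ :=
  ∑ e : E, f e * ((if G.src e = x then 1 else 0) - (if G.tgt e = x then 1 else 0))

lemma flowDiv_update (f : E → ℤ) (e : E) (c : ℤ) (x : V) :
    G.flowDiv (Function.update f e c) x =
      G.flowDiv f x + (c - f e) *
        ((if G.src e = x then 1 else 0) - (if G.tgt e = x then 1 else 0)) := by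
  unfold flowDiv
  have : ∀ e' : E, Function.update f e c e' *
      ((if G.src e' = x then 1 else 0) - (if G.tgt e' = x then 1 else 0)) =
      f e' * ((if G.src e' = x then 1 else 0) - (if G.tgt e' = x then 1 else 0)) +
      (if e' = e then (c - f e) *
        ((if G.src e = x then 1 else 0) - (if G.tgt e = x then 1 else 0)) else 0) := by
    intro e'
    by_cases h : e' = e
    · subst h; simp [Function.update]; ring
    · simp [Function.update, h]
  rw [Finset.sum_congr rfl fun e' _ => this e', Finset.sum_add_distrib,
    Finset.sum_ite_eq' Finset.univ e]
  simp

lemma flowDiv_zero (x : V) : G.flowDiv (fun _ => 0) x = 0 := by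
  simp [flowDiv]

lemma exists_step (f : E → ℤ) (x : V) (hd : 0 < G.flowDiv f x) :
    ∃ e, G.src e ≠ G.tgt e ∧
      ((G.src e = x ∧ 0 < f e) ∨ (G.tgt e = x ∧ f e < 0)) := by
  by_contra hcon
  push_neg at hcon
  have : G.flowDiv f x ≤ 0 := by
    apply Finset.sum_nonpos
    intro e _
    by_cases hl : G.src e = G.tgt e
    · simp [hl]
    · rcases hcon e hl with ⟨h1, h2⟩
      by_cases hs : G.src e = x
      · have : f e ≤ 0 := by
          by_contra hf; push_neg at hf; exact absurd (h1 hs) (by omega)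
        have ht : ¬ G.tgt e = x := fun h => hl (hs.trans h.symm)
        simp [hs, ht]; omega
      · by_cases ht : G.tgt e = x
        · have : 0 ≤ f e := by
            by_contra hf; push_neg at hf; exact absurd (h2 ht) (by omega)
          simp [hs, ht]; omega
        · simp [hs, ht]
  omega

end Flow
section Extract

variable {V E : Type*} [Fintype V] [Fintype E] (G : Multigraph V E)

lemma extract_trail (v : V) :
    ∀ (n : ℕ) (f : E → ℤ), (Finset.univ.filter (fun e => f e ≠ 0)).card ≤ n →
    (∀ e, f e = -1 ∨ f e = 0 ∨ f e = 1) →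
    ∀ x, x ≠ v → 0 < G.flowDiv f x → (∀ w, w ≠ v → 0 ≤ G.flowDiv f w) →
    ∃ (W : G.Walk x v) (g : E → ℤ),
      (∀ e, g e = -1 ∨ g e = 0 ∨ g e = 1) ∧ W.edges.Nodup ∧
      (∀ e ∈ W.edges, f e ≠ 0 ∧ g e = 0) ∧ (∀ e ∉ W.edges, g e = f e) ∧
      G.flowDiv g x = G.flowDiv f x - 1 ∧
      (∀ w, w ≠ x → w ≠ v → G.flowDiv g w = G.flowDiv f w) := by
  intro n
  induction n with
  | zero =>
    intro f hcard hval x hxv hdx _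
    obtain ⟨e, _, he⟩ := G.exists_step f x hdx
    have hne : f e ≠ 0 := by rcases he with ⟨_, h⟩ | ⟨_, h⟩ <;> omega
    have : e ∈ Finset.univ.filter (fun e => f e ≠ 0) := by simp [hne]
    have := Finset.card_pos.mpr ⟨e, this⟩
    omega
  | succ n ih =>
    intro f hcard hval x hxv hdx hpos
    obtain ⟨e, hloop, he⟩ := G.exists_step f x hdx
    have hne : f e ≠ 0 := by rcases he with ⟨_, h⟩ | ⟨_, h⟩ <;> omega
    set y : V := if G.src e = x then G.tgt e else G.src e with hy
    set f₁ : E → ℤ := Function.update f e 0 with hf₁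
    have hyx : y ≠ x := by
      by_cases hs : G.src e = x
      · have hyt : y = G.tgt e := by simp [hy, hs]
        rw [hyt]; exact fun h => hloop (hs.trans h.symm)
      · have hys : y = G.src e := by simp [hy, hs]
        rw [hys]; exact hs
    -- divergence facts for f₁
    have hd1x : G.flowDiv f₁ x = G.flowDiv f x - 1 := by
      rw [hf₁, G.flowDiv_update]
      rcases he with ⟨hs, hf⟩ | ⟨ht, hf⟩
      · have htx : ¬ G.tgt e = x := fun h => hloop (hs.trans h.symm)
        have : f e = 1 := by rcases hval e with h | h | h <;> omega
        simp [hs, htx, this]; try ring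
      · have hsx : ¬ G.src e = x := fun h => hloop (h.trans ht.symm)
        have : f e = -1 := by rcases hval e with h | h | h <;> omega
        simp [hsx, ht, this]; try ring
    have hd1y : G.flowDiv f₁ y = G.flowDiv f y + 1 := by
      rw [hf₁, G.flowDiv_update]
      rcases he with ⟨hs, hf⟩ | ⟨ht, hf⟩
      · have hty : G.tgt e = y := by simp [hy, hs]
        have hsy : ¬ G.src e = y := fun h => hyx (h.symm.trans hs)
        have : f e = 1 := by rcases hval e with h | h | h <;> omega
        simp [hsy, hty, this]; try ring
      · have hsx : ¬ G.src e = x := fun h => hloop (h.trans ht.symm)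
        have hsy : G.src e = y := by simp [hy, hsx]
        have hty : ¬ G.tgt e = y := fun h => hyx (h.symm.trans ht)
        have : f e = -1 := by rcases hval e with h | h | h <;> omega
        simp [hsy, hty, this]; try ring
    have hd1w : ∀ w, w ≠ x → w ≠ y → G.flowDiv f₁ w = G.flowDiv f w := by
      intro w hwx hwy
      rw [hf₁, G.flowDiv_update]
      rcases he with ⟨hs, _⟩ | ⟨ht, _⟩
      · have h1 : ¬ G.src e = w := fun h => hwx (h.symm.trans hs)
        have h2 : ¬ G.tgt e = w := fun h => hwy (h.symm.trans (by simp [hy, hs]))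
        simp [h1, h2]
      · have hsx : ¬ G.src e = x := fun h => hloop (h.trans ht.symm)
        have h1 : ¬ G.tgt e = w := fun h => hwx (h.symm.trans ht)
        have h2 : ¬ G.src e = w := fun h => hwy (h.symm.trans (by simp [hy, hsx]))
        simp [h1, h2]
    have hval₁ : ∀ e', f₁ e' = -1 ∨ f₁ e' = 0 ∨ f₁ e' = 1 := by
      intro e'
      by_cases h : e' = e
      · subst h; simp [hf₁]
      · simp only [hf₁, Function.update_of_ne h]; exact hval e'
    have hf₁e : f₁ e = 0 := by simp [hf₁]
    have hcard₁ : (Finset.univ.filter (fun e' => f₁ e' ≠ 0)).card ≤ n := by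
      have hsub : Finset.univ.filter (fun e' => f₁ e' ≠ 0) ⊆
          (Finset.univ.filter (fun e' => f e' ≠ 0)).erase e := by
        intro a ha
        simp only [Finset.mem_filter, Finset.mem_univ, true_and] at ha
        have hae : a ≠ e := fun h => ha (h ▸ hf₁e)
        refine Finset.mem_erase.mpr ⟨hae, ?_⟩
        simp only [Finset.mem_filter, Finset.mem_univ, true_and]
        rwa [hf₁, Function.update_of_ne hae] at ha
      have := Finset.card_le_card hsub
      have he' : e ∈ Finset.univ.filter (fun e' => f e' ≠ 0) := by simp [hne]
      have := Finset.card_erase_of_mem he'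
      omega
    -- the single step walk from x to y
    by_cases hyv : y = v
    · -- one step suffices
      subst hyv
      have hstep : ∃ W : G.Walk x y, W.edges = [e] := by
        by_cases hs : G.src e = x
        · exact ⟨.cons e hs (by simp [hy, hs]) (.nil _), by simp [Walk.edges]⟩
        · have ht : G.tgt e = x := by
            rcases he with ⟨hs', _⟩ | ⟨ht, _⟩
            · exact absurd hs' hs
            · exact ht
          exact ⟨.cons' e (by simp [hy, hs]) ht (.nil _), by simp [Walk.edges]⟩
      obtain ⟨W, hWe⟩ := hstep
      refine ⟨W, f₁, hval₁, ?_, ?_, ?_, hd1x, hd1w⟩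
      · rw [hWe]; exact List.nodup_singleton e
      · intro e' he'
        rw [hWe] at he'
        simp only [List.mem_singleton] at he'
        subst he'; exact ⟨hne, hf₁e⟩
      · intro e' he'
        rw [hWe] at he'
        simp only [List.mem_singleton] at he'
        rw [hf₁]; exact Function.update_of_ne he' 0 f
    · -- recurse from y
      have hdy : 0 < G.flowDiv f₁ y := by
        have := hpos y hyv; omega
      have hposy : ∀ w, w ≠ v → 0 ≤ G.flowDiv f₁ w := by
        intro w hwv
        by_cases hwx : w = x
        · subst hwx; omega
        · by_cases hwy : w = y
          · subst hwy; omega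
          · rw [hd1w w hwx hwy]; exact hpos w hwv
      obtain ⟨W', g, hvalg, hnodup, hin, hout, hdgy, hdgw⟩ :=
        ih f₁ hcard₁ hval₁ y hyv hdy hposy
      have heW' : e ∉ W'.edges := fun h => (hin e h).1 hf₁e
      -- build walk x → v
      rcases he with ⟨hs, hf⟩ | ⟨ht, hf⟩
      · refine ⟨.cons e hs (by simp [hy, hs]) W', g, hvalg, ?_, ?_, ?_, ?_, ?_⟩
        · simpa [Walk.edges] using ⟨heW', hnodup⟩
        · intro e' he'
          simp only [Walk.edges, List.mem_cons] at he'
          rcases he' with h | he'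
          · rw [h]
            exact ⟨hne, by rw [hout e heW', hf₁e]⟩
          · exact ⟨fun h0 => (hin e' he').1 (by
                have : e' ≠ e := fun h => heW' (h ▸ he')
                rw [hf₁, Function.update_of_ne this]; exact h0),
              (hin e' he').2⟩
        · intro e' he'
          simp only [Walk.edges, List.mem_cons, not_or] at he'
          rw [hout e' he'.2, hf₁, Function.update_of_ne he'.1]
        · rw [hdgw x (Ne.symm hyx) hxv, hd1x]
        · intro w hwx hwv
          by_cases hwy : w = y
          · subst hwy; rw [hdgy, hd1y]; ring
          · rw [hdgw w hwy hwv, hd1w w hwx hwy]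
      · have hsx : ¬ G.src e = x := fun h => hloop (h.trans ht.symm)
        refine ⟨.cons' e (by simp [hy, hsx]) ht W', g, hvalg, ?_, ?_, ?_, ?_, ?_⟩
        · simpa [Walk.edges] using ⟨heW', hnodup⟩
        · intro e' he'
          simp only [Walk.edges, List.mem_cons] at he'
          rcases he' with h | he'
          · rw [h]
            exact ⟨hne, by rw [hout e heW', hf₁e]⟩
          · exact ⟨fun h0 => (hin e' he').1 (by
                have : e' ≠ e := fun h => heW' (h ▸ he')
                rw [hf₁, Function.update_of_ne this]; exact h0),
              (hin e' he').2⟩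
        · intro e' he'
          simp only [Walk.edges, List.mem_cons, not_or] at he'
          rw [hout e' he'.2, hf₁, Function.update_of_ne he'.1]
        · rw [hdgw x (Ne.symm hyx) hxv, hd1x]
        · intro w hwx hwv
          by_cases hwy : w = y
          · subst hwy; rw [hdgy, hd1y]; ring
          · rw [hdgw w hwy hwv, hd1w w hwx hwy]

end Extract
section Decompose

variable {V E : Type*} [Fintype V] [Fintype E] (G : Multigraph V E)

lemma flow_decompose (u v : V) (huv : u ≠ v) :
    ∀ (k : ℕ) (f : E → ℤ), (∀ e, f e = -1 ∨ f e = 0 ∨ f e = 1) →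
    G.flowDiv f u = (k : ℤ) → (∀ w, w ≠ u → w ≠ v → G.flowDiv f w = 0) →
    ∃ P : Fin k → G.Walk u v, (∀ i, (P i).edges.Nodup) ∧
      (∀ i j, i ≠ j → ∀ e ∈ (P i).edges, e ∉ (P j).edges) ∧
      (∀ i, ∀ e ∈ (P i).edges, f e ≠ 0) := by
  intro k
  induction k with
  | zero =>
    intro f _ _ _
    exact ⟨fun i => i.elim0, fun i => i.elim0, fun i => i.elim0, fun i => i.elim0⟩
  | succ k ih =>
    intro f hval hdu hcons
    have hdx : 0 < G.flowDiv f u := by rw [hdu]; positivity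
    have hpos : ∀ w, w ≠ v → 0 ≤ G.flowDiv f w := by
      intro w hwv
      by_cases hwu : w = u
      · subst hwu; omega
      · rw [hcons w hwu hwv]
    obtain ⟨W, g, hvalg, hnodup, hin, hout, hdgu, hdgw⟩ :=
      G.extract_trail v (Finset.univ.filter (fun e => f e ≠ 0)).card f le_rfl hval u huv hdx hpos
    have hdgu' : G.flowDiv g u = (k : ℤ) := by rw [hdgu, hdu]; push_cast; ring
    have hconsg : ∀ w, w ≠ u → w ≠ v → G.flowDiv g w = 0 := by
      intro w hwu hwv; rw [hdgw w hwu hwv]; exact hcons w hwu hwv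
    obtain ⟨P', hP'nodup, hP'disj, hP'g⟩ := ih g hvalg hdgu' hconsg
    have key : ∀ i' e, e ∈ (P' i').edges → e ∉ W.edges := by
      intro i' e he hW
      exact hP'g i' e he ((hin e hW).2)
    have keyf : ∀ i' e, e ∈ (P' i').edges → f e ≠ 0 := by
      intro i' e he
      have hnW : e ∉ W.edges := key i' e he
      rw [← hout e hnW]
      exact hP'g i' e he
    refine ⟨Fin.cons W P', ?_, ?_, ?_⟩
    · intro i
      induction i using Fin.cases with
      | zero => simpa using hnodup
      | succ i' => simpa using hP'nodup i'
    · intro i j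
      induction i using Fin.cases with
      | zero =>
        induction j using Fin.cases with
        | zero => exact fun h => absurd rfl h
        | succ j' =>
          intro _ e he
          simp only [Fin.cons_zero] at he
          simp only [Fin.cons_succ]
          exact fun hc => key j' e hc he
      | succ i' =>
        induction j using Fin.cases with
        | zero =>
          intro _ e he
          simp only [Fin.cons_succ] at he
          simp only [Fin.cons_zero]
          exact key i' e he
        | succ j' =>
          intro hij e he
          simp only [Fin.cons_succ] at he ⊢
          exact hP'disj i' j' (fun h => hij (by rw [h])) e he
    · intro i
      induction i using Fin.cases with
      | zero =>
        intro e he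
        simp only [Fin.cons_zero] at he
        exact (hin e he).1
      | succ i' =>
        intro e he
        simp only [Fin.cons_succ] at he
        exact keyf i' e he

end Decompose
end Multigraph
section FlowExists

lemma chain_imp_local {α : Type*} {r r' : α → α → Prop} :
    ∀ (l : List α) (a : α), List.Chain r a l →
      (∀ x y, x ∈ a :: l → y ∈ l → r x y → r' x y) → List.Chain r' a l
  | [], _, _, _ => List.Chain.nil
  | b :: l, a, h, himp => by
      rw [List.Chain, List.chain_cons] at h ⊢
      exact ⟨himp a b (by simp) (by simp) h.1,
        chain_imp_local l b h.2
          (fun x y hx hy hr => himp x y (List.mem_cons_of_mem a hx)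
            (List.mem_cons_of_mem b hy) hr)⟩

lemma chain_nodup {α : Type*} {r : α → α → Prop} {v : α} :
    ∀ (n : ℕ) (l : List α), l.length ≤ n → ∀ a : α, a ≠ v →
      List.Chain r a (l ++ [v]) →
      ∃ l', List.Chain r a (l' ++ [v]) ∧ (a :: (l' ++ [v])).Nodup ∧ ∀ x ∈ l', x ∈ l := by
  intro n
  induction n with
  | zero =>
    intro l hl a hav hchain
    have hnil : l = [] := List.length_eq_zero_iff.mp (Nat.le_zero.mp hl)
    subst hnil
    exact ⟨[], hchain, by simp [hav], by simp⟩
  | succ n ih =>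
    intro l hl a hav hchain
    by_cases hal : a ∈ l
    · obtain ⟨s, t, rfl⟩ := List.append_of_mem hal
      rw [List.append_assoc, List.cons_append] at hchain
      have h2 := (List.isChain_cons_split.mp hchain).2
      have ht : t.length ≤ n := by
        simp only [List.length_append, List.length_cons] at hl; omega
      obtain ⟨l', c, nd, sub⟩ := ih t ht a hav h2
      exact ⟨l', c, nd, fun x hx => by simp [sub x hx]⟩
    · cases l with
      | nil => exact ⟨[], hchain, by simp [hav], by simp⟩
      | cons b l₀ =>
        rw [List.cons_append, List.Chain, List.chain_cons] at hchain
        by_cases hbv : b = v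
        · subst hbv
          refine ⟨[], ?_, by simp [hav], by simp⟩
          simpa using List.Chain.cons hchain.1 List.Chain.nil
        · have hbl : b ∈ b :: l₀ := List.mem_cons_self
          obtain ⟨l₁, c₁, nd₁, sub₁⟩ := ih l₀
            (by simp only [List.length_cons] at hl; omega) b hbv hchain.2
          refine ⟨b :: l₁, ?_, ?_, ?_⟩
          · rw [List.cons_append, List.Chain, List.chain_cons]; exact ⟨hchain.1, c₁⟩
          · rw [show (a :: (b :: l₁ ++ [v])) = a :: (b :: (l₁ ++ [v])) by simp,
              List.nodup_cons]
            refine ⟨?_, nd₁⟩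
            intro h
            rcases List.mem_cons.mp h with h1 | h1
            · exact hal (h1 ▸ hbl)
            · rcases List.mem_append.mp h1 with h2 | h2
              · exact hal (List.mem_cons_of_mem _ (sub₁ _ h2))
              · exact hav (List.mem_singleton.mp h2)
          · intro x hx
            rcases List.mem_cons.mp hx with rfl | hx
            · exact hbl
            · exact List.mem_cons_of_mem _ (sub₁ x hx)

namespace Multigraph

variable {V E : Type*} [Fintype V] [Fintype E] (G : Multigraph V E)

def Res (f : E → ℤ) (x y : V) : Prop :=
  ∃ e, (G.src e = x ∧ G.tgt e = y ∧ f e ≠ 1) ∨ (G.src e = y ∧ G.tgt e = x ∧ f e ≠ -1)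

lemma push_step (f : E → ℤ) (hval : ∀ e, f e = -1 ∨ f e = 0 ∨ f e = 1)
    {a b : V} (hr : G.Res f a b) :
    ∃ g : E → ℤ, (∀ e, g e = -1 ∨ g e = 0 ∨ g e = 1) ∧
      (∀ w, G.flowDiv g w = G.flowDiv f w
        + (if w = a then 1 else 0) - (if w = b then 1 else 0)) ∧
      (∀ e, g e ≠ f e →
        (G.src e = a ∧ G.tgt e = b) ∨ (G.src e = b ∧ G.tgt e = a)) := by
  obtain ⟨e, he⟩ := hr
  rcases he with ⟨hs, ht, hf⟩ | ⟨hs, ht, hf⟩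
  · refine ⟨Function.update f e (f e + 1), ?_, ?_, ?_⟩
    · intro e'
      by_cases h : e' = e
      · subst h; simp only [Function.update_self]; rcases hval e' with h|h|h <;> omega
      · rw [Function.update_of_ne h]; exact hval e'
    · intro w
      rw [G.flowDiv_update]
      have e1 : ∀ w : V, (if G.src e = w then (1:ℤ) else 0) = (if w = a then 1 else 0) := by
        intro w'
        rw [hs]
        by_cases h : w' = a
        · subst h; simp
        · rw [if_neg (fun hh => h hh.symm), if_neg h]
      have e2 : ∀ w : V, (if G.tgt e = w then (1:ℤ) else 0) = (if w = b then 1 else 0) := by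
        intro w'
        rw [ht]
        by_cases h : w' = b
        · subst h; simp
        · rw [if_neg (fun hh => h hh.symm), if_neg h]
      rw [e1, e2]; ring
    · intro e' he'
      by_cases h : e' = e
      · subst h; exact Or.inl ⟨hs, ht⟩
      · rw [Function.update_of_ne h] at he'; exact absurd rfl he'
  · refine ⟨Function.update f e (f e - 1), ?_, ?_, ?_⟩
    · intro e'
      by_cases h : e' = e
      · subst h; simp only [Function.update_self]; rcases hval e' with h|h|h <;> omega
      · rw [Function.update_of_ne h]; exact hval e'
    · intro w
      rw [G.flowDiv_update]
      have e1 : ∀ w : V, (if G.src e = w then (1:ℤ) else 0) = (if w = b then 1 else 0) := by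
        intro w'
        rw [hs]
        by_cases h : w' = b
        · subst h; simp
        · rw [if_neg (fun hh => h hh.symm), if_neg h]
      have e2 : ∀ w : V, (if G.tgt e = w then (1:ℤ) else 0) = (if w = a then 1 else 0) := by
        intro w'
        rw [ht]
        by_cases h : w' = a
        · subst h; simp
        · rw [if_neg (fun hh => h hh.symm), if_neg h]
      rw [e1, e2]; ring
    · intro e' he'
      by_cases h : e' = e
      · subst h; exact Or.inr ⟨hs, ht⟩
      · rw [Function.update_of_ne h] at he'; exact absurd rfl he'

lemma push (v : V) :
    ∀ (l : List V) (a : V) (f : E → ℤ), (∀ e, f e = -1 ∨ f e = 0 ∨ f e = 1) →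
    List.Chain (G.Res f) a (l ++ [v]) → (a :: (l ++ [v])).Nodup →
    ∃ g : E → ℤ, (∀ e, g e = -1 ∨ g e = 0 ∨ g e = 1) ∧
      ∀ w, G.flowDiv g w = G.flowDiv f w
        + (if w = a then 1 else 0) - (if w = v then 1 else 0) := by
  intro l
  induction l with
  | nil =>
    intro a f hval hchain _
    rw [List.nil_append, List.Chain, List.chain_cons] at hchain
    obtain ⟨g, hvalg, hdiv, _⟩ := G.push_step f hval hchain.1
    exact ⟨g, hvalg, hdiv⟩
  | cons b l₀ ih =>
    intro a f hval hchain hnodup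
    rw [List.cons_append, List.Chain, List.chain_cons] at hchain
    have hanb : a ∉ b :: (l₀ ++ [v]) := by
      rw [List.cons_append, List.nodup_cons] at hnodup
      exact hnodup.1
    obtain ⟨f₀, hval₀, hdiv₀, hch₀⟩ := G.push_step f hval hchain.1
    have hchain₀ : List.Chain (G.Res f₀) b (l₀ ++ [v]) := by
      refine chain_imp_local _ _ hchain.2 ?_
      intro x y hx hy hr
      obtain ⟨e, he⟩ := hr
      by_cases hfe : f₀ e = f e
      · exact ⟨e, by rw [hfe]; exact he⟩
      · exfalso
        rcases hch₀ e hfe with ⟨h1, h2⟩ | ⟨h1, h2⟩ <;>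
          rcases he with ⟨g1, g2, _⟩ | ⟨g1, g2, _⟩
        · have hax : a = x := by rw [← h1, g1]
          exact hanb (by rw [hax]; exact hx)
        · have hay : a = y := by rw [← h1, g1]
          exact hanb (by rw [hay]; exact List.mem_cons_of_mem b hy)
        · have hay : a = y := by rw [← h2, g2]
          exact hanb (by rw [hay]; exact List.mem_cons_of_mem b hy)
        · have hax : a = x := by rw [← h2, g2]
          exact hanb (by rw [hax]; exact hx)
    have hnodup₀ : (b :: (l₀ ++ [v])).Nodup := by
      rw [List.cons_append, List.nodup_cons] at hnodup
      exact hnodup.2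
    obtain ⟨g, hvalg, hdivg⟩ := ih b f₀ hval₀ hchain₀ hnodup₀
    refine ⟨g, hvalg, ?_⟩
    intro w
    rw [hdivg w, hdiv₀ w]
    ring

lemma flow_exists (u v : V) (huv : u ≠ v) (k : ℕ)
    (hcut : ∀ S : Set V, u ∈ S → v ∉ S → k ≤ (G.cutEdges S).ncard) :
    ∃ f : E → ℤ, (∀ e, f e = -1 ∨ f e = 0 ∨ f e = 1) ∧
      G.flowDiv f u = (k : ℤ) ∧ ∀ w, w ≠ u → w ≠ v → G.flowDiv f w = 0 := by
  suffices h : ∀ m : ℕ, m ≤ k → ∃ f : E → ℤ, (∀ e, f e = -1 ∨ f e = 0 ∨ f e = 1) ∧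
      G.flowDiv f u = (m : ℤ) ∧ ∀ w, w ≠ u → w ≠ v → G.flowDiv f w = 0 from h k le_rfl
  intro m
  induction m with
  | zero =>
    exact fun _ => ⟨fun _ => 0, fun _ => Or.inr (Or.inl rfl),
      by simpa using G.flowDiv_zero u, fun w _ _ => G.flowDiv_zero w⟩
  | succ m ih =>
    intro hmk
    obtain ⟨f, hval, hdu, hcons⟩ := ih (by omega)
    set S : Set V := {x | Relation.ReflTransGen (G.Res f) u x} with hS
    have huS : u ∈ S := Relation.ReflTransGen.refl
    by_cases hvS : v ∈ S
    · -- augment along a residual path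
      obtain ⟨l, hl, hlast⟩ := List.exists_isChain_cons_of_relationReflTransGen hvS
      have hlne : l ≠ [] := by
        rintro rfl
        exact huv (by simpa using hlast)
      have hdecomp : l.dropLast ++ [v] = l := by
        have h1 := List.dropLast_append_getLast hlne
        rw [List.getLast_cons hlne] at hlast
        rw [hlast] at h1
        exact h1
      rw [← hdecomp] at hl
      obtain ⟨l', hchain', hnodup', _⟩ :=
        chain_nodup l.dropLast.length l.dropLast le_rfl u huv hl
      obtain ⟨g, hvalg, hdivg⟩ := G.push v l' u f hval hchain' hnodup'
      refine ⟨g, hvalg, ?_, ?_⟩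
      · rw [hdivg u, hdu]
        simp only [if_pos rfl, if_neg huv]
        push_cast; ring
      · intro w hwu hwv
        rw [hdivg w, hcons w hwu hwv, if_neg hwu, if_neg hwv]
        ring
    · -- otherwise the cut of S is too small
      exfalso
      have hclosed : ∀ x y, x ∈ S → G.Res f x y → y ∈ S := fun x y hx h =>
        Relation.ReflTransGen.tail hx h
      have hSfin : S.Finite := Set.toFinite S
      set SF : Finset V := hSfin.toFinset with hSF
      have hmemSF : ∀ x, x ∈ SF ↔ x ∈ S := fun x => Set.Finite.mem_toFinset _
      have hedge : ∀ e : E,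
          f e * ((if G.src e ∈ SF then (1:ℤ) else 0) - (if G.tgt e ∈ SF then 1 else 0))
            = (if e ∈ G.cutEdges S then 1 else 0) := by
        intro e
        by_cases hs : G.src e ∈ S <;> by_cases ht : G.tgt e ∈ S
        · have hc : e ∉ G.cutEdges S := by
            simp [Multigraph.cutEdges, hs, ht]
          simp [hmemSF, hs, ht, hc]
        · have hf1 : f e = 1 := by
            by_contra h
            exact ht (hclosed _ _ hs ⟨e, Or.inl ⟨rfl, rfl, h⟩⟩)
          have hc : e ∈ G.cutEdges S := Or.inl ⟨hs, ht⟩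
          simp [hmemSF, hs, ht, hf1, hc]
        · have hf1 : f e = -1 := by
            by_contra h
            exact hs (hclosed _ _ ht ⟨e, Or.inr ⟨rfl, rfl, h⟩⟩)
          have hc : e ∈ G.cutEdges S := Or.inr ⟨hs, ht⟩
          simp [hmemSF, hs, ht, hf1, hc]
        · have hc : e ∉ G.cutEdges S := by
            simp [Multigraph.cutEdges, hs, ht]
          simp [hmemSF, hs, ht, hc]
      have h1 : ∑ x ∈ SF, G.flowDiv f x = (m : ℤ) := by
        rw [Finset.sum_eq_single_of_mem u ((hmemSF u).mpr huS)]
        · exact hdu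
        · intro x hx hxu
          exact hcons x hxu (fun h => hvS (h ▸ (hmemSF x).mp hx))
      have h2 : ∑ x ∈ SF, G.flowDiv f x =
          ∑ e : E, f e * ((if G.src e ∈ SF then (1:ℤ) else 0)
            - (if G.tgt e ∈ SF then 1 else 0)) := by
        unfold flowDiv
        rw [Finset.sum_comm]
        refine Finset.sum_congr rfl fun e _ => ?_
        rw [← Finset.mul_sum, Finset.sum_sub_distrib,
          Finset.sum_ite_eq SF (G.src e) (fun _ => (1:ℤ)),
          Finset.sum_ite_eq SF (G.tgt e) (fun _ => (1:ℤ))]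
      have h3 : ∑ e : E, (if e ∈ G.cutEdges S then (1:ℤ) else 0)
          = ((G.cutEdges S).ncard : ℤ) := by
        have hn : (G.cutEdges S).ncard
            = (Finset.univ.filter (fun e => e ∈ G.cutEdges S)).card := by
          rw [Set.ncard_eq_toFinset_card']
          congr 1
          ext e
          simp
        rw [hn]
        simp [Finset.sum_boole]
      have hmn : (m : ℤ) = ((G.cutEdges S).ncard : ℤ) := by
        rw [← h1, h2, Finset.sum_congr rfl (fun e _ => hedge e), h3]
      have hkle := hcut S huS hvS
      have : m = (G.cutEdges S).ncard := by exact_mod_cast hmn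
      omega

end Multigraph

end FlowExists
section Assembly

namespace Multigraph

variable {V E : Type*}

lemma menger [Fintype V] [Fintype E] (G : Multigraph V E) (u v : V) (huv : u ≠ v) (k : ℕ)
    (hcut : ∀ S : Set V, u ∈ S → v ∉ S → k ≤ (G.cutEdges S).ncard) :
    ∃ P : Fin k → G.Walk u v, (∀ i, (P i).edges.Nodup) ∧
      (∀ i j, i ≠ j → ∀ e ∈ (P i).edges, e ∉ (P j).edges) := by
  obtain ⟨f, hval, hdu, hcons⟩ := G.flow_exists u v huv k hcut
  obtain ⟨P, h1, h2, _⟩ := G.flow_decompose u v huv k f hval hdu hcons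
  exact ⟨P, h1, h2⟩

noncomputable def auxG (G : Multigraph V E) (t : ℕ) (x : Fin (t + 1) → V) :
    Multigraph (V ⊕ Unit) (E ⊕ (Fin t × Fin (t - 1))) where
  src := Sum.elim (fun e0 => Sum.inl (G.src e0)) (fun _ => Sum.inr ())
  tgt := Sum.elim (fun e0 => Sum.inl (G.tgt e0)) (fun p => Sum.inl (x p.1.castSucc))

lemma auxG_split (G : Multigraph V E) (t : ℕ) (x : Fin (t + 1) → V) (b : V)
    (W : (auxG G t x).Walk (Sum.inr ()) (Sum.inl b)) :
    ∃ (p : Fin t × Fin (t - 1))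
      (rest : (auxG G t x).Walk (Sum.inl (x p.1.castSucc)) (Sum.inl b)),
      W.edges = Sum.inr p :: rest.edges := by
  cases W with
  | cons e hs ht rest =>
    cases e with
    | inl e0 => exact absurd hs (by simp [auxG])
    | inr p =>
      have ht' : ((auxG G t x).tgt (Sum.inr p) = Sum.inl (x p.1.castSucc)) := rfl
      refine ⟨p, rest.wcast (ht.symm.trans ht'), ?_⟩
      · simp [Walk.edges, Walk.edges_wcast]
  | cons' e hs ht rest =>
    cases e with
    | inl e0 => exact absurd ht (by simp [auxG])
    | inr p => exact absurd ht (by simp [auxG])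

lemma auxG_lift (G : Multigraph V E) (t : ℕ) (x : Fin (t + 1) → V) :
    ∀ {a b : V ⊕ Unit} (W : (auxG G t x).Walk a b),
    (∀ p : Fin t × Fin (t - 1), Sum.inr p ∉ W.edges) →
    ∀ a0 b0 : V, a = Sum.inl a0 → b = Sum.inl b0 →
    ∃ W0 : G.Walk a0 b0, W.edges = W0.edges.map Sum.inl := by
  intro a b W
  induction W with
  | nil v =>
    intro _ a0 b0 ha hb
    have : a0 = b0 := Sum.inl_injective (ha.symm.trans hb)
    subst this
    subst ha
    exact ⟨.nil a0, by simp [Walk.edges]⟩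
  | cons e hs ht rest ih =>
    intro hne a0 b0 ha hb
    cases e with
    | inr p => exact (hne p (by simp [Walk.edges])).elim
    | inl e0 =>
      subst ha
      have hs0 : G.src e0 = a0 := Sum.inl_injective hs
      have ht0 : _ = Sum.inl (G.tgt e0) := ht.symm.trans rfl
      obtain ⟨W0, hW0⟩ := ih (fun p hp => hne p (by simp [Walk.edges, hp]))
        (G.tgt e0) b0 ht0 hb
      exact ⟨.cons e0 hs0 rfl W0, by simp [Walk.edges, hW0]⟩
  | cons' e hs ht rest ih =>
    intro hne a0 b0 ha hb
    cases e with
    | inr p => exact (hne p (by simp [Walk.edges])).elim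
    | inl e0 =>
      subst ha
      have ht0 : G.tgt e0 = a0 := Sum.inl_injective ht
      have hs0 : _ = Sum.inl (G.src e0) := hs.symm.trans rfl
      obtain ⟨W0, hW0⟩ := ih (fun p hp => hne p (by simp [Walk.edges, hp]))
        (G.src e0) b0 hs0 hb
      exact ⟨.cons' e0 rfl ht0 W0, by simp [Walk.edges, hW0]⟩

def enc {t : ℕ} (i j : Fin t) (h : j ≠ i) : Fin (t - 1) :=
  if hlt : (j : ℕ) < (i : ℕ) then ⟨j, by have := i.isLt; omega⟩
  else ⟨(j : ℕ) - 1, by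
    have h1 : (i : ℕ) ≤ j := le_of_not_gt hlt
    have h2 : (i : ℕ) ≠ (j : ℕ) := fun hh => h (Fin.ext hh.symm)
    have := j.isLt; omega⟩

lemma enc_inj {t : ℕ} (i j j' : Fin t) (h : j ≠ i) (h' : j' ≠ i)
    (he : enc i j h = enc i j' h') : j = j' := by
  have hv := congrArg Fin.val he
  unfold enc at hv
  have hji : (j : ℕ) ≠ (i : ℕ) := fun hh => h (Fin.ext hh)
  have hj'i : (j' : ℕ) ≠ (i : ℕ) := fun hh => h' (Fin.ext hh)
  have hj := j.isLt
  have hj' := j'.isLt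
  split_ifs at hv <;> (apply Fin.ext; simp only at hv; omega)

end Multigraph

end Assembly
end MengerAux
/-- if `X` is a set of `t + 1` vertices no two of which are separated by an
edge cut of size less than `t²`, then `G` contains `K_t` as a weak immersion. -/
theorem weakImmersion_clique_of_edgeConnected {V E : Type*} [Fintype V] [Fintype E]
    (G : Multigraph V E) (t : ℕ) (ht : 1 ≤ t) (X : Set V) (hX : X.ncard = t + 1)
    (hconn : G.EdgeConnSet (t ^ 2) X) :
    Multigraph.WeakImmersion (Multigraph.completeMG t) G := by
  classical
  haveI : Fintype X := (Set.toFinite X).fintype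
  have hcard : Fintype.card X = t + 1 := by
    rw [← Nat.card_eq_fintype_card, Nat.card_coe_set_eq, hX]
  let eX : X ≃ Fin (t + 1) := Fintype.equivFinOfCardEq hcard
  set x : Fin (t + 1) → V := fun i => (eX.symm i : V) with hx
  have hxinj : Function.Injective x := fun i j h =>
    eX.symm.injective (Subtype.coe_injective h)
  have hxX : ∀ i, x i ∈ X := fun i => (eX.symm i).2
  set hub : V := x (Fin.last t) with hhub
  set Gp := Multigraph.auxG G t x with hGp
  set sV : V ⊕ Unit := Sum.inr () with hsV
  set hubp : V ⊕ Unit := Sum.inl hub with hhubp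
  set k : ℕ := t * (t - 1) with hk
  have hsv : sV ≠ hubp := by simp [hsV, hhubp]
  have hkt : k ≤ t ^ 2 := by
    calc k = t * (t - 1) := rfl
    _ ≤ t * t := Nat.mul_le_mul_left t (Nat.sub_le t 1)
    _ = t ^ 2 := (sq t).symm
  have hcut : ∀ S : Set (V ⊕ Unit), sV ∈ S → hubp ∉ S → k ≤ (Gp.cutEdges S).ncard := by
    intro S hsS hhS
    by_cases hA : ∃ i : Fin t, Sum.inl (x i.castSucc) ∈ S
    · obtain ⟨i, hi⟩ := hA
      set SV : Set V := {w | Sum.inl w ∈ S} with hSV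
      have hG2 : t ^ 2 ≤ (G.cutEdges SV).ncard := by
        by_contra hlt
        push_neg at hlt
        have hiff := hconn SV hlt (x i.castSucc) (hxX _) hub (hxX _)
        exact hhS (hiff.mp hi)
      have himg : (Sum.inl '' (G.cutEdges SV) : Set (E ⊕ (Fin t × Fin (t - 1)))) ⊆
          Gp.cutEdges S := by
        rintro _ ⟨e0, he0, rfl⟩
        rcases he0 with ⟨h1, h2⟩ | ⟨h1, h2⟩
        · exact Or.inl ⟨h1, h2⟩
        · exact Or.inr ⟨h1, h2⟩
      calc k ≤ t ^ 2 := hkt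
        _ ≤ (G.cutEdges SV).ncard := hG2
        _ = ((Sum.inl '' (G.cutEdges SV) : Set (E ⊕ (Fin t × Fin (t - 1))))).ncard :=
            (Set.ncard_image_of_injective _ Sum.inl_injective).symm
        _ ≤ (Gp.cutEdges S).ncard := Set.ncard_le_ncard himg (Set.toFinite _)
    · push_neg at hA
      have himg : ((Sum.inr '' (Set.univ : Set (Fin t × Fin (t - 1))))
          : Set (E ⊕ (Fin t × Fin (t - 1)))) ⊆ Gp.cutEdges S := by
        rintro _ ⟨p, -, rfl⟩
        exact Or.inl ⟨hsS, hA p.1⟩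
      calc k = (Set.univ : Set (Fin t × Fin (t - 1))).ncard := by
            rw [Set.ncard_univ, Nat.card_eq_fintype_card, Fintype.card_prod,
              Fintype.card_fin, Fintype.card_fin]
        _ = ((Sum.inr '' (Set.univ : Set (Fin t × Fin (t - 1)))) : Set _).ncard :=
            (Set.ncard_image_of_injective _ Sum.inr_injective).symm
        _ ≤ (Gp.cutEdges S).ncard := Set.ncard_le_ncard himg (Set.toFinite _)
  obtain ⟨P, hPnd, hPdj⟩ := Gp.menger sV hubp hsv k hcut
  have hsplit := fun i => Multigraph.auxG_split G t x hub (P i)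
  choose F rest hFrest using hsplit
  have hFmem : ∀ i, Sum.inr (F i) ∈ (P i).edges := fun i => by
    rw [hFrest i]; exact List.mem_cons_self
  have hFinj : Function.Injective F := by
    intro i j hij
    by_contra hne
    exact hPdj i j hne (Sum.inr (F i)) (hFmem i) (hij ▸ hFmem j)
  have hFbij : Function.Bijective F :=
    (Fintype.bijective_iff_injective_and_card F).mpr ⟨hFinj, by
      simp [hk, Fintype.card_prod]⟩
  let Fe : Fin k ≃ (Fin t × Fin (t - 1)) := Equiv.ofBijective F hFbij
  have hFe : ∀ p, F (Fe.symm p) = p := fun p => Fe.apply_symm_apply p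
  have hrest_ne : ∀ i (q : Fin t × Fin (t - 1)), Sum.inr q ∉ (rest i).edges := by
    intro i q hq
    have hq' : Sum.inr q ∈ (P i).edges := by
      rw [hFrest i]; exact List.mem_cons_of_mem _ hq
    have hqj : Sum.inr q ∈ (P (Fe.symm q)).edges := by
      rw [hFrest (Fe.symm q)]
      exact List.mem_cons.mpr (Or.inl (by rw [hFe]))
    by_cases hij : i = Fe.symm q
    · have hFi : F i = q := by rw [hij]; exact hFe q
      have hnotin : Sum.inr (F i) ∉ (rest i).edges := by
        have hnd := hPnd i
        rw [hFrest i] at hnd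
        exact (List.nodup_cons.mp hnd).1
      exact hnotin (hFi ▸ hq)
    · exact hPdj (Fe.symm q) i (fun h => hij h.symm) _ hqj hq'
  have hlift := fun i => Multigraph.auxG_lift G t x (rest i) (hrest_ne i)
      (x (F i).1.castSucc) hub rfl rfl
  choose Q hQ using hlift
  have hQnd : ∀ i, (Q i).edges.Nodup := by
    intro i
    have hnd := hPnd i
    rw [hFrest i] at hnd
    have h2 := (List.nodup_cons.mp hnd).2
    rw [hQ i] at h2
    exact h2.of_map
  have hQdj : ∀ i j, i ≠ j → ∀ e ∈ (Q i).edges, e ∉ (Q j).edges := by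
    intro i j hij e hei hej
    have h1 : Sum.inl e ∈ (P i).edges := by
      rw [hFrest i]
      exact List.mem_cons_of_mem _ (by rw [hQ i]; exact List.mem_map_of_mem hei)
    have h2 : Sum.inl e ∈ (P j).edges := by
      rw [hFrest j]
      exact List.mem_cons_of_mem _ (by rw [hQ j]; exact List.mem_map_of_mem hej)
    exact hPdj i j hij _ h1 h2
  let T : ∀ (_ : Fin t) (_ : Fin (t - 1)), Multigraph.Walk G _ hub := fun i c =>
    (Q (Fe.symm (i, c))).wcast
      (congrArg (fun z : Fin t × Fin (t - 1) => x z.1.castSucc) (hFe (i, c)))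
  have hTtype : ∀ (i : Fin t) (c : Fin (t - 1)), G.Walk (x i.castSucc) hub := T
  have hTedges : ∀ i c, (T i c).edges = (Q (Fe.symm (i, c))).edges := fun i c =>
    Multigraph.Walk.edges_wcast _ _
  have hTnd : ∀ i c, (T i c).edges.Nodup := fun i c => by
    rw [hTedges]; exact hQnd _
  have hidx : ∀ (a b : Fin t) (c d : Fin (t - 1)), (a, c) ≠ (b, d) →
      ∀ e ∈ (T a c).edges, e ∉ (T b d).edges := by
    intro a b c d hne e he1 he2
    rw [hTedges] at he1 he2
    exact hQdj _ _ (fun h => hne (Fe.symm.injective h)) e he1 he2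
  let pathF : ∀ ep : {p : Fin t × Fin t // p.1 < p.2},
      G.Walk (x ep.1.1.castSucc) (x ep.1.2.castSucc) := fun ep =>
    (T ep.1.1 (Multigraph.enc ep.1.1 ep.1.2 ep.2.ne')).append
      ((T ep.1.2 (Multigraph.enc ep.1.2 ep.1.1 ep.2.ne)).reverse)
  have hpathedges : ∀ ep, (pathF ep).edges =
      (T ep.1.1 (Multigraph.enc ep.1.1 ep.1.2 ep.2.ne')).edges ++
        ((T ep.1.2 (Multigraph.enc ep.1.2 ep.1.1 ep.2.ne)).edges).reverse := fun ep => by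
    simp only [pathF, Multigraph.Walk.edges_append, Multigraph.Walk.edges_reverse]
  refine ⟨⟨fun a => x a.castSucc, ?_, pathF, ?_, ?_⟩⟩
  · intro a b h
    exact Fin.castSucc_inj.mp (hxinj h)
  · intro ep
    change ((pathF ep).edges).Nodup
    rw [hpathedges ep]
    refine List.Nodup.append (hTnd _ _) (by rw [List.nodup_reverse]; exact hTnd _ _) ?_
    intro e he1 he2
    rw [List.mem_reverse] at he2
    refine hidx _ _ _ _ ?_ e he1 he2
    intro hcontra
    exact ep.2.ne (congrArg Prod.fst hcontra)
  · intro ep fq hne e he1 he2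
    change e ∈ (pathF ep).edges at he1
    change e ∈ (pathF fq).edges at he2
    rw [hpathedges ep] at he1
    rw [hpathedges fq] at he2
    obtain ⟨⟨i, j⟩, hij⟩ := ep
    obtain ⟨⟨p, q⟩, hpq⟩ := fq
    have hnepair : (i, j) ≠ (p, q) := fun h => hne (Subtype.ext h)
    simp only at he1 he2 hij hpq
    have n1 : (i, Multigraph.enc i j hij.ne') ≠ (p, Multigraph.enc p q hpq.ne') := by
      intro h
      have h1 : i = p := congrArg Prod.fst h
      subst h1
      have h2 := congrArg Prod.snd h
      simp only at h2
      exact hnepair (by rw [Multigraph.enc_inj i j q hij.ne' hpq.ne' h2])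
    have n2 : (i, Multigraph.enc i j hij.ne') ≠ (q, Multigraph.enc q p hpq.ne) := by
      intro h
      have h1 : i = q := congrArg Prod.fst h
      subst h1
      have h2 := congrArg Prod.snd h
      simp only at h2
      have h3 : j = p := Multigraph.enc_inj i j p hij.ne' hpq.ne h2
      subst h3
      exact absurd (hij.trans hpq) (lt_irrefl _)
    have n3 : (j, Multigraph.enc j i hij.ne) ≠ (p, Multigraph.enc p q hpq.ne') := by
      intro h
      have h1 : j = p := congrArg Prod.fst h
      subst h1
      have h2 := congrArg Prod.snd h
      simp only at h2
      have h3 : i = q := Multigraph.enc_inj j i q hij.ne hpq.ne' h2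
      subst h3
      exact absurd (hpq.trans hij) (lt_irrefl _)
    have n4 : (j, Multigraph.enc j i hij.ne) ≠ (q, Multigraph.enc q p hpq.ne) := by
      intro h
      have h1 : j = q := congrArg Prod.fst h
      subst h1
      have h2 := congrArg Prod.snd h
      simp only at h2
      have h3 : i = p := Multigraph.enc_inj j i p hij.ne hpq.ne h2
      exact hnepair (by rw [h3])
    rcases List.mem_append.mp he1 with h1 | h1 <;>
      rcases List.mem_append.mp he2 with h2 | h2
    · exact hidx _ _ _ _ n1 e h1 h2
    · exact hidx _ _ _ _ n2 e h1 (List.mem_reverse.mp h2)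
    · exact hidx _ _ _ _ n3 e (List.mem_reverse.mp h1) h2
    · exact hidx _ _ _ _ n4 e (List.mem_reverse.mp h1) (List.mem_reverse.mp h2)
end

section
/- Suppose G = G₁ ⊕̂_k G₂ for some k ≥ 0 and that G_i has a tree-cut decomposition (T_i, X_i) for i = 1,2. Then G has a tree-cut decomposition (T, Y) whose adhesion equals max{k, adhesion(T₁,X₁), adhesion(T₂,X₂)}. -/
open scoped Classical

open SimpleGraph

namespace LinkTree

variable {τ₁ τ₂ : Type*} (T₁ : SimpleGraph τ₁) (T₂ : SimpleGraph τ₂) (t₁ : τ₁) (t₂ : τ₂)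

/-- Join two graphs by an edge between `t₁` and `t₂`. -/
def link : SimpleGraph (τ₁ ⊕ τ₂) where
  Adj x y := match x, y with
    | .inl a, .inl b => T₁.Adj a b
    | .inr a, .inr b => T₂.Adj a b
    | .inl a, .inr b => a = t₁ ∧ b = t₂
    | .inr a, .inl b => a = t₂ ∧ b = t₁
  symm := by
    constructor
    rintro (a | a) (b | b) h
    · exact h.symm
    · exact ⟨h.2, h.1⟩
    · exact ⟨h.2, h.1⟩
    · exact h.symm
  loopless := by
    constructor
    rintro (a | a) h
    · exact T₁.loopless.irrefl a h
    · exact T₂.loopless.irrefl a h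

variable {T₁ T₂ t₁ t₂}

@[simp] lemma link_adj_inl_inl {a b : τ₁} :
    (link T₁ T₂ t₁ t₂).Adj (.inl a) (.inl b) ↔ T₁.Adj a b := Iff.rfl

@[simp] lemma link_adj_inr_inr {a b : τ₂} :
    (link T₁ T₂ t₁ t₂).Adj (.inr a) (.inr b) ↔ T₂.Adj a b := Iff.rfl

@[simp] lemma link_adj_inl_inr {a : τ₁} {b : τ₂} :
    (link T₁ T₂ t₁ t₂).Adj (.inl a) (.inr b) ↔ a = t₁ ∧ b = t₂ := Iff.rfl

@[simp] lemma link_adj_inr_inl {a : τ₂} {b : τ₁} :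
    (link T₁ T₂ t₁ t₂).Adj (.inr a) (.inl b) ↔ a = t₂ ∧ b = t₁ := Iff.rfl

/-- Any walk between the two sides passes through the bridge. -/
lemma bridge_mem_of_cross : ∀ {x y : τ₁ ⊕ τ₂} (p : (link T₁ T₂ t₁ t₂).Walk x y),
    x.isLeft ≠ y.isLeft → s(Sum.inl t₁, Sum.inr t₂) ∈ p.edges := by
  intro x y p
  induction p with
  | nil => intro h; exact absurd rfl h
  | @cons u v w huv p ih =>
    intro hxy
    by_cases hside : u.isLeft = v.isLeft
    · exact List.mem_cons_of_mem _ (ih (fun h => hxy (hside.trans h)))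
    · rw [Walk.edges_cons, List.mem_cons]
      left
      match u, v with
      | .inl a, .inl b => exact absurd rfl hside
      | .inr a, .inr b => exact absurd rfl hside
      | .inl a, .inr b =>
        obtain ⟨rfl, rfl⟩ := huv; rfl
      | .inr a, .inl b =>
        obtain ⟨rfl, rfl⟩ := huv; exact Sym2.eq_swap

lemma projectL_aux : ∀ (n : ℕ) {x y : τ₁ ⊕ τ₂} (p : (link T₁ T₂ t₁ t₂).Walk x y),
    p.length ≤ n → ∀ {a b : τ₁}, x = .inl a → y = .inl b →
    ∃ q : T₁.Walk a b, ∀ e ∈ q.edges, Sym2.map Sum.inl e ∈ p.edges := by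
  classical
  intro n
  induction n with
  | zero =>
    intro x y p hp a b hx hy
    cases p with
    | nil =>
      subst hx; obtain rfl : a = b := by injection hy
      exact ⟨Walk.nil, by simp [Walk.edges]⟩
    | cons h q => simp [Walk.length_cons] at hp
  | succ n ih =>
    intro x y p hp a b hx hy
    cases p with
    | nil =>
      subst hx; obtain rfl : a = b := by injection hy
      exact ⟨Walk.nil, by simp [Walk.edges]⟩
    | @cons _ v _ huv p' =>
      subst hx; subst hy
      have hp' : p'.length ≤ n := by
        simpa [Walk.length_cons, Nat.succ_le_succ_iff] using hp
      match v, huv with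
      | .inl c, huv =>
        obtain ⟨q, hq⟩ := ih p' hp' rfl rfl
        refine ⟨Walk.cons (link_adj_inl_inl.mp huv) q, ?_⟩
        intro e he
        rw [Walk.edges_cons, List.mem_cons] at he ⊢
        rcases he with rfl | he
        · left; rfl
        · right; exact hq e he
      | .inr c, huv =>
        obtain ⟨ha, hc⟩ := link_adj_inl_inr.mp huv
        subst ha; subst hc
        have hcross : (Sum.inr c : τ₁ ⊕ τ₂).isLeft ≠ (Sum.inl b : τ₁ ⊕ τ₂).isLeft := by simp
        have hbr := bridge_mem_of_cross p' hcross
        have hsup : (Sum.inl a : τ₁ ⊕ τ₂) ∈ p'.support :=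
          p'.fst_mem_support_of_mem_edges hbr
        have hlen : (p'.dropUntil _ hsup).length ≤ n :=
          le_trans (Walk.length_dropUntil_le p' hsup) hp'
        obtain ⟨q, hq⟩ := ih (p'.dropUntil _ hsup) hlen rfl rfl
        refine ⟨q, fun e he => ?_⟩
        rw [Walk.edges_cons, List.mem_cons]
        exact Or.inr (Walk.edges_dropUntil_subset p' hsup (hq e he))

lemma projectL {a b : τ₁} (p : (link T₁ T₂ t₁ t₂).Walk (.inl a) (.inl b)) :
    ∃ q : T₁.Walk a b, ∀ e ∈ q.edges, Sym2.map Sum.inl e ∈ p.edges :=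
  projectL_aux p.length p le_rfl rfl rfl

lemma projectR_aux : ∀ (n : ℕ) {x y : τ₁ ⊕ τ₂} (p : (link T₁ T₂ t₁ t₂).Walk x y),
    p.length ≤ n → ∀ {a b : τ₂}, x = .inr a → y = .inr b →
    ∃ q : T₂.Walk a b, ∀ e ∈ q.edges, Sym2.map Sum.inr e ∈ p.edges := by
  classical
  intro n
  induction n with
  | zero =>
    intro x y p hp a b hx hy
    cases p with
    | nil =>
      subst hx; obtain rfl : a = b := by injection hy
      exact ⟨Walk.nil, by simp [Walk.edges]⟩
    | cons h q => simp [Walk.length_cons] at hp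
  | succ n ih =>
    intro x y p hp a b hx hy
    cases p with
    | nil =>
      subst hx; obtain rfl : a = b := by injection hy
      exact ⟨Walk.nil, by simp [Walk.edges]⟩
    | @cons _ v _ huv p' =>
      subst hx; subst hy
      have hp' : p'.length ≤ n := by
        simpa [Walk.length_cons, Nat.succ_le_succ_iff] using hp
      match v, huv with
      | .inr c, huv =>
        obtain ⟨q, hq⟩ := ih p' hp' rfl rfl
        refine ⟨Walk.cons (link_adj_inr_inr.mp huv) q, ?_⟩
        intro e he
        rw [Walk.edges_cons, List.mem_cons] at he ⊢
        rcases he with rfl | he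
        · left; rfl
        · right; exact hq e he
      | .inl c, huv =>
        obtain ⟨ha, hc⟩ := link_adj_inr_inl.mp huv
        subst ha; subst hc
        have hcross : (Sum.inl c : τ₁ ⊕ τ₂).isLeft ≠ (Sum.inr b : τ₁ ⊕ τ₂).isLeft := by simp
        have hbr := bridge_mem_of_cross p' hcross
        have hsup : (Sum.inr a : τ₁ ⊕ τ₂) ∈ p'.support :=
          p'.snd_mem_support_of_mem_edges hbr
        have hlen : (p'.dropUntil _ hsup).length ≤ n :=
          le_trans (Walk.length_dropUntil_le p' hsup) hp'
        obtain ⟨q, hq⟩ := ih (p'.dropUntil _ hsup) hlen rfl rfl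
        refine ⟨q, fun e he => ?_⟩
        rw [Walk.edges_cons, List.mem_cons]
        exact Or.inr (Walk.edges_dropUntil_subset p' hsup (hq e he))

lemma projectR {a b : τ₂} (p : (link T₁ T₂ t₁ t₂).Walk (.inr a) (.inr b)) :
    ∃ q : T₂.Walk a b, ∀ e ∈ q.edges, Sym2.map Sum.inr e ∈ p.edges :=
  projectR_aux p.length p le_rfl rfl rfl

section homs

lemma inl_edge_ne_of_ne {u v a b : τ₁} (h : s(u, v) ≠ s(a, b)) :
    s((Sum.inl u : τ₁ ⊕ τ₂), Sum.inl v) ≠ s(Sum.inl a, Sum.inl b) := by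
  intro hh
  apply h
  rw [Sym2.eq_iff] at hh ⊢
  simp_all

lemma inr_edge_ne_inl {u v : τ₂} {a b : τ₁} :
    s((Sum.inr u : τ₁ ⊕ τ₂), Sum.inr v) ≠ s(Sum.inl a, Sum.inl b) := by
  intro hh; rw [Sym2.eq_iff] at hh; simp_all

lemma inl_edge_ne_inr {u v : τ₁} {a : τ₁} {b : τ₂} :
    s((Sum.inl u : τ₁ ⊕ τ₂), Sum.inl v) ≠ s(Sum.inl a, Sum.inr b) := by
  intro hh; rw [Sym2.eq_iff] at hh; simp_all

lemma inr_edge_ne_bridge {u v : τ₂} {a : τ₁} {b : τ₂} :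
    s((Sum.inr u : τ₁ ⊕ τ₂), Sum.inr v) ≠ s(Sum.inl a, Sum.inr b) := by
  intro hh; rw [Sym2.eq_iff] at hh; simp_all

lemma inr_edge_ne_of_ne {u v a b : τ₂} (h : s(u, v) ≠ s(a, b)) :
    s((Sum.inr u : τ₁ ⊕ τ₂), Sum.inr v) ≠ s(Sum.inr a, Sum.inr b) := by
  intro hh
  apply h
  rw [Sym2.eq_iff] at hh ⊢
  simp_all

lemma inl_edge_ne_of_ne' {u v : τ₁} {a b : τ₂} :
    s((Sum.inl u : τ₁ ⊕ τ₂), Sum.inl v) ≠ s(Sum.inr a, Sum.inr b) := by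
  intro hh; rw [Sym2.eq_iff] at hh; simp_all

lemma cross_edge_ne_inl {a : τ₁} {b : τ₂} {u v : τ₁} :
    s((Sum.inl a : τ₁ ⊕ τ₂), Sum.inr b) ≠ s(Sum.inl u, Sum.inl v) := by
  intro hh; rw [Sym2.eq_iff] at hh; simp_all

lemma cross_edge_ne_inr {a : τ₁} {b : τ₂} {u v : τ₂} :
    s((Sum.inl a : τ₁ ⊕ τ₂), Sum.inr b) ≠ s(Sum.inr u, Sum.inr v) := by
  intro hh; rw [Sym2.eq_iff] at hh; simp_all

/-- `Sum.inl` as a hom from `T₁ − {s(a,b)}` to `link − {s(inl a, inl b)}`. -/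
lemma reach_del_inl {a b x y : τ₁}
    (h : (T₁.deleteEdges {s(a, b)}).Reachable x y) :
    ((link T₁ T₂ t₁ t₂).deleteEdges {s(Sum.inl a, Sum.inl b)}).Reachable (.inl x) (.inl y) := by
  refine h.map ⟨Sum.inl, ?_⟩
  intro u v huv
  rw [SimpleGraph.deleteEdges_adj] at huv ⊢
  exact ⟨huv.1, by simpa using inl_edge_ne_of_ne (τ₂ := τ₂) (by simpa using huv.2)⟩

lemma reach_del_inl_inr {a b : τ₁} {x y : τ₂} (h : T₂.Reachable x y) :
    ((link T₁ T₂ t₁ t₂).deleteEdges {s(Sum.inl a, Sum.inl b)}).Reachable (.inr x) (.inr y) := by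
  refine h.map ⟨Sum.inr, ?_⟩
  intro u v huv
  rw [SimpleGraph.deleteEdges_adj]
  exact ⟨huv, by simpa using inr_edge_ne_inl⟩

lemma reach_del_inr {a b x y : τ₂}
    (h : (T₂.deleteEdges {s(a, b)}).Reachable x y) :
    ((link T₁ T₂ t₁ t₂).deleteEdges {s(Sum.inr a, Sum.inr b)}).Reachable (.inr x) (.inr y) := by
  refine h.map ⟨Sum.inr, ?_⟩
  intro u v huv
  rw [SimpleGraph.deleteEdges_adj] at huv ⊢
  exact ⟨huv.1, by simpa using inr_edge_ne_of_ne (τ₁ := τ₁) (by simpa using huv.2)⟩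

lemma reach_del_inr_inl {a b : τ₂} {x y : τ₁} (h : T₁.Reachable x y) :
    ((link T₁ T₂ t₁ t₂).deleteEdges {s(Sum.inr a, Sum.inr b)}).Reachable (.inl x) (.inl y) := by
  refine h.map ⟨Sum.inl, ?_⟩
  intro u v huv
  rw [SimpleGraph.deleteEdges_adj]
  exact ⟨huv, by simpa using inl_edge_ne_of_ne'⟩

lemma reach_del_bridge_inr {x y : τ₂} (h : T₂.Reachable x y) :
    ((link T₁ T₂ t₁ t₂).deleteEdges {s(Sum.inl t₁, Sum.inr t₂)}).Reachable (.inr x) (.inr y) := by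
  refine h.map ⟨Sum.inr, ?_⟩
  intro u v huv
  rw [SimpleGraph.deleteEdges_adj]
  exact ⟨huv, by simpa using inr_edge_ne_bridge⟩

lemma reach_del_bridge_inl {x y : τ₁} (h : T₁.Reachable x y) :
    ((link T₁ T₂ t₁ t₂).deleteEdges {s(Sum.inl t₁, Sum.inr t₂)}).Reachable (.inl x) (.inl y) := by
  refine h.map ⟨Sum.inl, ?_⟩
  intro u v huv
  rw [SimpleGraph.deleteEdges_adj]
  exact ⟨huv, by simpa using inl_edge_ne_inr⟩

end homs

section reach

lemma edges_mem_link {s : Set (Sym2 (τ₁ ⊕ τ₂))} {x y : τ₁ ⊕ τ₂}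
    (p : ((link T₁ T₂ t₁ t₂).deleteEdges s).Walk x y) :
    ∀ e ∈ p.edges, e ∈ (link T₁ T₂ t₁ t₂).edgeSet := by
  intro e he
  have := p.edges_subset_edgeSet he
  rw [SimpleGraph.edgeSet_deleteEdges] at this
  exact this.1

lemma edges_not_mem {s : Set (Sym2 (τ₁ ⊕ τ₂))} {x y : τ₁ ⊕ τ₂}
    (p : ((link T₁ T₂ t₁ t₂).deleteEdges s).Walk x y) :
    ∀ e ∈ p.edges, e ∉ s := by
  intro e he
  have := p.edges_subset_edgeSet he
  rw [SimpleGraph.edgeSet_deleteEdges] at this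
  exact this.2

lemma reach_del_inl_iff {a b x y : τ₁} :
    ((link T₁ T₂ t₁ t₂).deleteEdges {s(Sum.inl a, Sum.inl b)}).Reachable (.inl x) (.inl y) ↔
      (T₁.deleteEdges {s(a, b)}).Reachable x y := by
  constructor
  · rintro ⟨p⟩
    let p' := p.transfer _ (edges_mem_link p)
    obtain ⟨q, hq⟩ := projectL p'
    refine ⟨q.toDeleteEdges _ (fun e he hmem => ?_)⟩
    rw [Set.mem_singleton_iff] at hmem
    subst hmem
    have h1 : Sym2.map Sum.inl s(a, b) ∈ p'.edges := hq _ he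
    rw [Sym2.map_pair_eq] at h1
    rw [Walk.edges_transfer] at h1
    exact edges_not_mem p _ h1 rfl
  · exact reach_del_inl

lemma reach_del_inr_iff {a b x y : τ₂} :
    ((link T₁ T₂ t₁ t₂).deleteEdges {s(Sum.inr a, Sum.inr b)}).Reachable (.inr x) (.inr y) ↔
      (T₂.deleteEdges {s(a, b)}).Reachable x y := by
  constructor
  · rintro ⟨p⟩
    let p' := p.transfer _ (edges_mem_link p)
    obtain ⟨q, hq⟩ := projectR p'
    refine ⟨q.toDeleteEdges _ (fun e he hmem => ?_)⟩
    rw [Set.mem_singleton_iff] at hmem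
    subst hmem
    have h1 : Sym2.map Sum.inr s(a, b) ∈ p'.edges := hq _ he
    rw [Sym2.map_pair_eq] at h1
    rw [Walk.edges_transfer] at h1
    exact edges_not_mem p _ h1 rfl
  · exact reach_del_inr

lemma reach_del_inl_cross_iff (hT₂ : T₂.Preconnected) {a b x : τ₁} {y : τ₂} :
    ((link T₁ T₂ t₁ t₂).deleteEdges {s(Sum.inl a, Sum.inl b)}).Reachable (.inl x) (.inr y) ↔
      (T₁.deleteEdges {s(a, b)}).Reachable x t₁ := by
  classical
  constructor
  · rintro ⟨p⟩
    let p' := p.transfer _ (edges_mem_link p)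
    have hbr := bridge_mem_of_cross p' (by simp)
    have hsup : (Sum.inl t₁ : τ₁ ⊕ τ₂) ∈ p'.support :=
      p'.fst_mem_support_of_mem_edges hbr
    obtain ⟨q, hq⟩ := projectL (p'.takeUntil _ hsup)
    refine ⟨q.toDeleteEdges _ (fun e he hmem => ?_)⟩
    rw [Set.mem_singleton_iff] at hmem
    subst hmem
    have h1 := Walk.edges_takeUntil_subset p' hsup (hq _ he)
    rw [Sym2.map_pair_eq] at h1
    rw [Walk.edges_transfer] at h1
    exact edges_not_mem p _ h1 rfl
  · intro h
    refine (reach_del_inl h).trans (SimpleGraph.Adj.reachable ?_ |>.trans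
      (reach_del_inl_inr (hT₂ t₂ y)))
    rw [SimpleGraph.deleteEdges_adj]
    exact ⟨⟨rfl, rfl⟩, by simpa using cross_edge_ne_inl⟩

lemma reach_del_inr_cross_iff (hT₁ : T₁.Preconnected) {a b x : τ₂} {y : τ₁} :
    ((link T₁ T₂ t₁ t₂).deleteEdges {s(Sum.inr a, Sum.inr b)}).Reachable (.inr x) (.inl y) ↔
      (T₂.deleteEdges {s(a, b)}).Reachable x t₂ := by
  classical
  constructor
  · rintro ⟨p⟩
    let p' := p.transfer _ (edges_mem_link p)
    have hbr := bridge_mem_of_cross p' (by simp)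
    have hsup : (Sum.inr t₂ : τ₁ ⊕ τ₂) ∈ p'.support :=
      p'.snd_mem_support_of_mem_edges hbr
    obtain ⟨q, hq⟩ := projectR (p'.takeUntil _ hsup)
    refine ⟨q.toDeleteEdges _ (fun e he hmem => ?_)⟩
    rw [Set.mem_singleton_iff] at hmem
    subst hmem
    have h1 := Walk.edges_takeUntil_subset p' hsup (hq _ he)
    rw [Sym2.map_pair_eq] at h1
    rw [Walk.edges_transfer] at h1
    exact edges_not_mem p _ h1 rfl
  · intro h
    refine (reach_del_inr h).trans (SimpleGraph.Adj.reachable ?_ |>.trans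
      (reach_del_inr_inl (hT₁ t₁ y)))
    rw [SimpleGraph.deleteEdges_adj]
    refine ⟨⟨rfl, rfl⟩, ?_⟩
    simp only [Set.mem_singleton_iff]
    intro hh; rw [Sym2.eq_iff] at hh; simp_all

lemma not_reach_del_bridge_cross {x : τ₁} {y : τ₂} :
    ¬ ((link T₁ T₂ t₁ t₂).deleteEdges {s(Sum.inl t₁, Sum.inr t₂)}).Reachable (.inl x) (.inr y) := by
  rintro ⟨p⟩
  let p' := p.transfer _ (edges_mem_link p)
  have hbr := bridge_mem_of_cross p' (by simp)
  rw [Walk.edges_transfer] at hbr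
  exact edges_not_mem p _ hbr rfl

end reach

section tree

/-- `Sum.inl` as a graph hom. -/
def homL : T₁ →g link T₁ T₂ t₁ t₂ := ⟨Sum.inl, fun {u v} h => h⟩

/-- `Sum.inr` as a graph hom. -/
def homR : T₂ →g link T₁ T₂ t₁ t₂ := ⟨Sum.inr, fun {u v} h => h⟩

theorem link_isTree (h₁ : T₁.IsTree) (h₂ : T₂.IsTree) : (link T₁ T₂ t₁ t₂).IsTree := by
  constructor
  · -- connected
    have hne : Nonempty τ₁ := h₁.isConnected.nonempty
    haveI : Nonempty (τ₁ ⊕ τ₂) := ⟨Sum.inl hne.some⟩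
    refine ⟨?_⟩
    have hbr : (link T₁ T₂ t₁ t₂).Reachable (.inl t₁) (.inr t₂) :=
      SimpleGraph.Adj.reachable ⟨rfl, rfl⟩
    rintro (a | a) (b | b)
    · exact (h₁.isConnected.preconnected a b).map (homL (t₁ := t₁) (t₂ := t₂))
    · exact (((h₁.isConnected.preconnected a t₁).map homL).trans hbr).trans
        ((h₂.isConnected.preconnected t₂ b).map homR)
    · exact ((((h₁.isConnected.preconnected b t₁).map homL).trans hbr).trans
        ((h₂.isConnected.preconnected t₂ a).map homR)).symm
    · exact (h₂.isConnected.preconnected a b).map homR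
  · -- acyclic
    rw [SimpleGraph.isAcyclic_iff_forall_adj_isBridge]
    rintro (a | a) (b | b) huv <;> rw [SimpleGraph.isBridge_iff]
    · intro hr
      have hr' : ((link T₁ T₂ t₁ t₂).deleteEdges {s(Sum.inl a, Sum.inl b)}).Reachable
          (.inl a) (.inl b) := hr
      rw [reach_del_inl_iff] at hr'
      have := SimpleGraph.isBridge_iff.mp (SimpleGraph.isAcyclic_iff_forall_adj_isBridge.mp h₁.IsAcyclic huv)
      exact this hr'
    · obtain ⟨rfl, rfl⟩ : a = t₁ ∧ b = t₂ := huv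
      exact fun hr => not_reach_del_bridge_cross hr
    · obtain ⟨rfl, rfl⟩ : a = t₂ ∧ b = t₁ := huv
      intro hr
      have hr' : ((link T₁ T₂ b a).deleteEdges {s(Sum.inl b, Sum.inr a)}).Reachable
          (.inl b) (.inr a) := by
        have : s((Sum.inr a : τ₁ ⊕ τ₂), Sum.inl b) = s(Sum.inl b, Sum.inr a) := Sym2.eq_swap
        rw [this] at hr
        exact hr.symm
      exact not_reach_del_bridge_cross hr'
    · intro hr
      have hr' : ((link T₁ T₂ t₁ t₂).deleteEdges {s(Sum.inr a, Sum.inr b)}).Reachable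
          (.inr a) (.inr b) := hr
      rw [reach_del_inr_iff] at hr'
      have := SimpleGraph.isBridge_iff.mp (SimpleGraph.isAcyclic_iff_forall_adj_isBridge.mp h₂.IsAcyclic huv)
      exact this hr'

end tree

end LinkTree
section EdgeSumConstr

open Multigraph LinkTree

variable {V E V₁ E₁ V₂ E₂ τ₁ τ₂ : Type*}
variable {G : Multigraph V E} {G₁ : Multigraph V₁ E₁} {G₂ : Multigraph V₂ E₂} {k : ℕ}

namespace EdgeSumConstr

/-- The bag function of the combined decomposition. -/
def bagY (wit : Multigraph.EdgeSumWitness G G₁ G₂ k)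
    (D₁ : Multigraph.TreeCutDecomp G₁ τ₁) (D₂ : Multigraph.TreeCutDecomp G₂ τ₂) :
    τ₁ ⊕ τ₂ → Set V :=
  Sum.elim (fun t => (fun x : {x : V₁ // x ≠ wit.v₁} => wit.φ.symm (Sum.inl x)) ''
      {x | x.1 ∈ D₁.bag t})
    (fun t => (fun y : {y : V₂ // y ≠ wit.v₂} => wit.φ.symm (Sum.inr y)) ''
      {y | y.1 ∈ D₂.bag t})

variable (wit : Multigraph.EdgeSumWitness G G₁ G₂ k)
  (D₁ : Multigraph.TreeCutDecomp G₁ τ₁) (D₂ : Multigraph.TreeCutDecomp G₂ τ₂)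

lemma mem_bagY_inl {x : {x : V₁ // x ≠ wit.v₁}} {t : τ₁} :
    wit.φ.symm (Sum.inl x) ∈ bagY wit D₁ D₂ (.inl t) ↔ x.1 ∈ D₁.bag t := by
  simp only [bagY, Sum.elim_inl, Set.mem_image]
  constructor
  · rintro ⟨x', hx', h⟩
    obtain rfl : x' = x := by
      have := wit.φ.symm.injective h
      exact Sum.inl_injective this
    exact hx'
  · exact fun h => ⟨x, h, rfl⟩

lemma mem_bagY_inr {y : {y : V₂ // y ≠ wit.v₂}} {t : τ₂} :
    wit.φ.symm (Sum.inr y) ∈ bagY wit D₁ D₂ (.inr t) ↔ y.1 ∈ D₂.bag t := by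
  simp only [bagY, Sum.elim_inr, Set.mem_image]
  constructor
  · rintro ⟨y', hy', h⟩
    obtain rfl : y' = y := by
      have := wit.φ.symm.injective h
      exact Sum.inr_injective this
    exact hy'
  · exact fun h => ⟨y, h, rfl⟩

lemma not_mem_bagY_inr {x : {x : V₁ // x ≠ wit.v₁}} {t : τ₂} :
    wit.φ.symm (Sum.inl x) ∉ bagY wit D₁ D₂ (.inr t) := by
  simp only [bagY, Sum.elim_inr, Set.mem_image]
  rintro ⟨y, -, h⟩
  have := wit.φ.symm.injective h
  exact Sum.inr_ne_inl this

lemma not_mem_bagY_inl {y : {y : V₂ // y ≠ wit.v₂}} {t : τ₁} :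
    wit.φ.symm (Sum.inr y) ∉ bagY wit D₁ D₂ (.inl t) := by
  simp only [bagY, Sum.elim_inl, Set.mem_image]
  rintro ⟨x, -, h⟩
  have := wit.φ.symm.injective h
  exact Sum.inl_ne_inr this

/-- The combined tree-cut decomposition. -/
noncomputable def Dsum : Multigraph.TreeCutDecomp G (τ₁ ⊕ τ₂) where
  tree := LinkTree.link D₁.tree D₂.tree (D₁.nodeOf wit.v₁) (D₂.nodeOf wit.v₂)
  tree_isTree := LinkTree.link_isTree D₁.tree_isTree D₂.tree_isTree
  bag := bagY wit D₁ D₂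
  bag_disj := by
    rintro (i | i) (j | j) hij <;> rw [Set.disjoint_left]
    · rintro v ⟨x, hx, rfl⟩ hj
      rw [mem_bagY_inl] at hj
      have hne : i ≠ j := fun h => hij (by rw [h])
      exact Set.disjoint_left.mp (D₁.bag_disj i j hne) hx hj
    · rintro v ⟨x, hx, rfl⟩ hj
      exact not_mem_bagY_inr wit D₁ D₂ hj
    · rintro v ⟨y, hy, rfl⟩ hj
      exact not_mem_bagY_inl wit D₁ D₂ hj
    · rintro v ⟨y, hy, rfl⟩ hj
      rw [mem_bagY_inr] at hj
      have hne : i ≠ j := fun h => hij (by rw [h])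
      exact Set.disjoint_left.mp (D₂.bag_disj i j hne) hy hj
  bag_union := by
    ext v
    simp only [Set.mem_iUnion, Set.mem_univ, iff_true]
    have hv : v = wit.φ.symm (wit.φ v) := (wit.φ.symm_apply_apply v).symm
    rcases h : wit.φ v with x | y
    · obtain ⟨t, ht⟩ := D₁.exists_bag x.1
      refine ⟨.inl t, ?_⟩
      rw [hv, h]
      exact (mem_bagY_inl wit D₁ D₂).mpr ht
    · obtain ⟨t, ht⟩ := D₂.exists_bag y.1
      refine ⟨.inr t, ?_⟩
      rw [hv, h]
      exact (mem_bagY_inr wit D₁ D₂).mpr ht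

lemma mem_sideVerts_iff {u w : τ₁ ⊕ τ₂} {v : V} :
    v ∈ (Dsum wit D₁ D₂).sideVerts u w ↔
      ∃ n, ((LinkTree.link D₁.tree D₂.tree (D₁.nodeOf wit.v₁)
        (D₂.nodeOf wit.v₂)).deleteEdges {s(u, w)}).Reachable w n ∧ v ∈ bagY wit D₁ D₂ n := by
  simp only [Multigraph.TreeCutDecomp.sideVerts, Dsum, Set.mem_iUnion]
  constructor
  · rintro ⟨n, hr, hm⟩; exact ⟨n, hr, hm⟩
  · rintro ⟨n, hr, hm⟩; exact ⟨n, hr, hm⟩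

lemma mem_sideVerts_iff₁ {u w : τ₁} {v : V₁} :
    v ∈ D₁.sideVerts u w ↔
      ∃ n, (D₁.tree.deleteEdges {s(u, w)}).Reachable w n ∧ v ∈ D₁.bag n := by
  simp only [Multigraph.TreeCutDecomp.sideVerts, Set.mem_iUnion]
  constructor
  · rintro ⟨n, hr, hm⟩; exact ⟨n, hr, hm⟩
  · rintro ⟨n, hr, hm⟩; exact ⟨n, hr, hm⟩

lemma mem_sideVerts_iff₂ {u w : τ₂} {v : V₂} :
    v ∈ D₂.sideVerts u w ↔
      ∃ n, (D₂.tree.deleteEdges {s(u, w)}).Reachable w n ∧ v ∈ D₂.bag n := by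
  simp only [Multigraph.TreeCutDecomp.sideVerts, Set.mem_iUnion]
  constructor
  · rintro ⟨n, hr, hm⟩; exact ⟨n, hr, hm⟩
  · rintro ⟨n, hr, hm⟩; exact ⟨n, hr, hm⟩

lemma mem_bag_nodeOf {v : V₁} {t : τ₁} (h : v ∈ D₁.bag t) : t = D₁.nodeOf v := by
  by_contra hne
  exact Set.disjoint_left.mp (D₁.bag_disj t _ hne) h (D₁.nodeOf_mem v)

lemma mem_bag_nodeOf₂ {v : V₂} {t : τ₂} (h : v ∈ D₂.bag t) : t = D₂.nodeOf v := by
  by_contra hne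
  exact Set.disjoint_left.mp (D₂.bag_disj t _ hne) h (D₂.nodeOf_mem v)

lemma v₁_mem_sideVerts_iff {a b : τ₁} :
    wit.v₁ ∈ D₁.sideVerts a b ↔
      (D₁.tree.deleteEdges {s(a, b)}).Reachable b (D₁.nodeOf wit.v₁) := by
  rw [mem_sideVerts_iff₁]
  constructor
  · rintro ⟨t, hr, hm⟩
    rwa [mem_bag_nodeOf D₁ hm] at hr
  · intro h
    exact ⟨_, h, D₁.nodeOf_mem wit.v₁⟩

lemma v₂_mem_sideVerts_iff {a b : τ₂} :
    wit.v₂ ∈ D₂.sideVerts a b ↔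
      (D₂.tree.deleteEdges {s(a, b)}).Reachable b (D₂.nodeOf wit.v₂) := by
  rw [mem_sideVerts_iff₂]
  constructor
  · rintro ⟨t, hr, hm⟩
    rwa [mem_bag_nodeOf₂ D₂ hm] at hr
  · intro h
    exact ⟨_, h, D₂.nodeOf_mem wit.v₂⟩

/-! side-vertex computations for tree edges inside `τ₁` -/

lemma side_inl_left {a b : τ₁} (x : {x : V₁ // x ≠ wit.v₁}) :
    wit.φ.symm (Sum.inl x) ∈ (Dsum wit D₁ D₂).sideVerts (.inl a) (.inl b) ↔
      x.1 ∈ D₁.sideVerts a b := by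
  rw [mem_sideVerts_iff, mem_sideVerts_iff₁]
  constructor
  · rintro ⟨n, hr, hm⟩
    match n with
    | .inl t =>
      rw [mem_bagY_inl] at hm
      exact ⟨t, (LinkTree.reach_del_inl_iff).mp hr, hm⟩
    | .inr t => exact absurd hm (not_mem_bagY_inr wit D₁ D₂)
  · rintro ⟨t, hr, hm⟩
    exact ⟨.inl t, LinkTree.reach_del_inl hr, (mem_bagY_inl wit D₁ D₂).mpr hm⟩

lemma side_inl_right {a b : τ₁} (y : {y : V₂ // y ≠ wit.v₂}) :
    wit.φ.symm (Sum.inr y) ∈ (Dsum wit D₁ D₂).sideVerts (.inl a) (.inl b) ↔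
      wit.v₁ ∈ D₁.sideVerts a b := by
  rw [mem_sideVerts_iff, v₁_mem_sideVerts_iff]
  constructor
  · rintro ⟨n, hr, hm⟩
    match n with
    | .inl t => exact absurd hm (not_mem_bagY_inl wit D₁ D₂)
    | .inr t =>
      exact (LinkTree.reach_del_inl_cross_iff
        (D₂.tree_isTree.isConnected.preconnected)).mp hr
  · intro h
    obtain ⟨t, ht⟩ := D₂.exists_bag y.1
    refine ⟨.inr t, ?_, (mem_bagY_inr wit D₁ D₂).mpr ht⟩
    exact (LinkTree.reach_del_inl_cross_iff
      (D₂.tree_isTree.isConnected.preconnected)).mpr h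

/-! side-vertex computations for tree edges inside `τ₂` -/

lemma side_inr_right {a b : τ₂} (y : {y : V₂ // y ≠ wit.v₂}) :
    wit.φ.symm (Sum.inr y) ∈ (Dsum wit D₁ D₂).sideVerts (.inr a) (.inr b) ↔
      y.1 ∈ D₂.sideVerts a b := by
  rw [mem_sideVerts_iff, mem_sideVerts_iff₂]
  constructor
  · rintro ⟨n, hr, hm⟩
    match n with
    | .inr t =>
      rw [mem_bagY_inr] at hm
      exact ⟨t, (LinkTree.reach_del_inr_iff).mp hr, hm⟩
    | .inl t => exact absurd hm (not_mem_bagY_inl wit D₁ D₂)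
  · rintro ⟨t, hr, hm⟩
    exact ⟨.inr t, LinkTree.reach_del_inr hr, (mem_bagY_inr wit D₁ D₂).mpr hm⟩

lemma side_inr_left {a b : τ₂} (x : {x : V₁ // x ≠ wit.v₁}) :
    wit.φ.symm (Sum.inl x) ∈ (Dsum wit D₁ D₂).sideVerts (.inr a) (.inr b) ↔
      wit.v₂ ∈ D₂.sideVerts a b := by
  rw [mem_sideVerts_iff, v₂_mem_sideVerts_iff]
  constructor
  · rintro ⟨n, hr, hm⟩
    match n with
    | .inr t => exact absurd hm (not_mem_bagY_inr wit D₁ D₂)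
    | .inl t =>
      exact (LinkTree.reach_del_inr_cross_iff
        (D₁.tree_isTree.isConnected.preconnected)).mp hr
  · intro h
    obtain ⟨t, ht⟩ := D₁.exists_bag x.1
    refine ⟨.inl t, ?_, (mem_bagY_inl wit D₁ D₂).mpr ht⟩
    exact (LinkTree.reach_del_inr_cross_iff
      (D₁.tree_isTree.isConnected.preconnected)).mpr h

/-! side-vertex computations for the joining edge -/

lemma side_bridge_left (x : {x : V₁ // x ≠ wit.v₁}) :
    wit.φ.symm (Sum.inl x) ∉
      (Dsum wit D₁ D₂).sideVerts (.inl (D₁.nodeOf wit.v₁)) (.inr (D₂.nodeOf wit.v₂)) := by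
  rw [mem_sideVerts_iff]
  rintro ⟨n, hr, hm⟩
  match n with
  | .inl t => exact LinkTree.not_reach_del_bridge_cross hr.symm
  | .inr t => exact absurd hm (not_mem_bagY_inr wit D₁ D₂)

lemma side_bridge_right (y : {y : V₂ // y ≠ wit.v₂}) :
    wit.φ.symm (Sum.inr y) ∈
      (Dsum wit D₁ D₂).sideVerts (.inl (D₁.nodeOf wit.v₁)) (.inr (D₂.nodeOf wit.v₂)) := by
  rw [mem_sideVerts_iff]
  obtain ⟨t, ht⟩ := D₂.exists_bag y.1
  exact ⟨.inr t, LinkTree.reach_del_bridge_inr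
    (D₂.tree_isTree.isConnected.preconnected _ _), (mem_bagY_inr wit D₁ D₂).mpr ht⟩

lemma bridge_swap :
    ({s((Sum.inr (D₂.nodeOf wit.v₂) : τ₁ ⊕ τ₂), Sum.inl (D₁.nodeOf wit.v₁))} :
        Set (Sym2 (τ₁ ⊕ τ₂))) =
      {s(Sum.inl (D₁.nodeOf wit.v₁), Sum.inr (D₂.nodeOf wit.v₂))} := by
  rw [Sym2.eq_swap]

lemma side_bridge'_left (x : {x : V₁ // x ≠ wit.v₁}) :
    wit.φ.symm (Sum.inl x) ∈
      (Dsum wit D₁ D₂).sideVerts (.inr (D₂.nodeOf wit.v₂)) (.inl (D₁.nodeOf wit.v₁)) := by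
  rw [mem_sideVerts_iff]
  obtain ⟨t, ht⟩ := D₁.exists_bag x.1
  refine ⟨.inl t, ?_, (mem_bagY_inl wit D₁ D₂).mpr ht⟩
  rw [bridge_swap]
  exact LinkTree.reach_del_bridge_inl (D₁.tree_isTree.isConnected.preconnected _ _)

lemma side_bridge'_right (y : {y : V₂ // y ≠ wit.v₂}) :
    wit.φ.symm (Sum.inr y) ∉
      (Dsum wit D₁ D₂).sideVerts (.inr (D₂.nodeOf wit.v₂)) (.inl (D₁.nodeOf wit.v₁)) := by
  rw [mem_sideVerts_iff]
  rintro ⟨n, hr, hm⟩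
  rw [bridge_swap] at hr
  match n with
  | .inl t => exact absurd hm (not_mem_bagY_inl wit D₁ D₂)
  | .inr t => exact LinkTree.not_reach_del_bridge_cross hr

end EdgeSumConstr

end EdgeSumConstr
section Cuts

open Multigraph LinkTree EdgeSumConstr

variable {V E V₁ E₁ V₂ E₂ τ₁ τ₂ : Type*}
variable {G : Multigraph V E} {G₁ : Multigraph V₁ E₁} {G₂ : Multigraph V₂ E₂} {k : ℕ}

namespace EdgeSumConstr

lemma mem_cutEdges {GG : Multigraph V E} {S : Set V} {e : E} :
    e ∈ GG.cutEdges S ↔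
      ((GG.src e ∈ S ∧ GG.tgt e ∉ S) ∨ (GG.src e ∉ S ∧ GG.tgt e ∈ S)) := Iff.rfl

lemma cut_pair {GG : Multigraph V E} {e : E} {w₁ w₂ : V}
    (h : s(GG.src e, GG.tgt e) = s(w₁, w₂)) (S : Set V) :
    e ∈ GG.cutEdges S ↔ ((w₁ ∈ S ∧ w₂ ∉ S) ∨ (w₁ ∉ S ∧ w₂ ∈ S)) := by
  rw [mem_cutEdges]
  rw [Sym2.eq_iff] at h
  rcases h with ⟨h1, h2⟩ | ⟨h1, h2⟩ <;> rw [h1, h2] <;> tauto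

lemma inc_cut {v₁ : V₁} {e : E₁} (h : G₁.Inc e v₁)
    (hnl : ¬(G₁.src e = v₁ ∧ G₁.tgt e = v₁)) (S₁ : Set V₁) :
    e ∈ G₁.cutEdges S₁ ↔
      ((G₁.otherEnd v₁ e ∈ S₁ ∧ v₁ ∉ S₁) ∨ (G₁.otherEnd v₁ e ∉ S₁ ∧ v₁ ∈ S₁)) := by
  rw [mem_cutEdges]
  by_cases hs : G₁.src e = v₁
  · rw [Multigraph.otherEnd, if_pos hs, hs]
    tauto
  · have ht : G₁.tgt e = v₁ := h.resolve_left hs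
    rw [Multigraph.otherEnd, if_neg hs, ht]

variable (wit : Multigraph.EdgeSumWitness G G₁ G₂ k)

/-- Where an edge of `G₁` lives in the edge classification of `G`. -/
noncomputable def g₁ : E₁ →
    ({e : E₁ // ¬ G₁.Inc e wit.v₁} ⊕ {e : E₂ // ¬ G₂.Inc e wit.v₂} ⊕
      {e : E₁ // G₁.Inc e wit.v₁}) := fun e =>
  if h : G₁.Inc e wit.v₁ then .inr (.inr ⟨e, h⟩) else .inl ⟨e, h⟩

noncomputable def g₂ : E₂ →
    ({e : E₁ // ¬ G₁.Inc e wit.v₁} ⊕ {e : E₂ // ¬ G₂.Inc e wit.v₂} ⊕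
      {e : E₁ // G₁.Inc e wit.v₁}) := fun e =>
  if h : G₂.Inc e wit.v₂ then .inr (.inr (wit.π.symm ⟨e, h⟩)) else .inr (.inl ⟨e, h⟩)

lemma g₁_inj : Function.Injective (g₁ wit) := by
  intro e f h
  unfold g₁ at h
  by_cases h1 : G₁.Inc e wit.v₁ <;> by_cases h2 : G₁.Inc f wit.v₁
  · rw [dif_pos h1, dif_pos h2] at h; simpa using h
  · rw [dif_pos h1, dif_neg h2] at h; simp at h
  · rw [dif_neg h1, dif_pos h2] at h; simp at h
  · rw [dif_neg h1, dif_neg h2] at h; simpa using h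

lemma g₂_inj : Function.Injective (g₂ wit) := by
  intro e f h
  unfold g₂ at h
  by_cases h1 : G₂.Inc e wit.v₂ <;> by_cases h2 : G₂.Inc f wit.v₂
  · rw [dif_pos h1, dif_pos h2] at h
    have h' : wit.π.symm ⟨e, h1⟩ = wit.π.symm ⟨f, h2⟩ := by simpa using h
    simpa using wit.π.symm.injective h'
  · rw [dif_pos h1, dif_neg h2] at h; simp at h
  · rw [dif_neg h1, dif_pos h2] at h; simp at h
  · rw [dif_neg h1, dif_neg h2] at h; simpa using h

lemma cut_transfer₁ (S : Set V) (S₁ : Set V₁)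
    (h1 : ∀ x : {x : V₁ // x ≠ wit.v₁}, wit.φ.symm (Sum.inl x) ∈ S ↔ x.1 ∈ S₁)
    (h2 : ∀ y : {y : V₂ // y ≠ wit.v₂}, wit.φ.symm (Sum.inr y) ∈ S ↔ wit.v₁ ∈ S₁) :
    G.cutEdges S = (fun e => wit.ψ.symm (g₁ wit e)) '' (G₁.cutEdges S₁) := by
  ext e
  rw [Set.mem_image]
  rcases hψ : wit.ψ e with e₁ | e₂ | e₁
  · have hends := wit.ends₁ e e₁ hψ
    rw [cut_pair hends]
    simp only [h1]
    constructor
    · intro h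
      refine ⟨e₁.1, h, ?_⟩
      rw [g₁, dif_neg e₁.2, Equiv.symm_apply_eq, hψ]
    · rintro ⟨f, hf, hfe⟩
      have hg : g₁ wit f = .inl e₁ := by
        rw [← hψ, ← hfe, Equiv.apply_symm_apply]
      rw [g₁] at hg
      by_cases hInc : G₁.Inc f wit.v₁
      · rw [dif_pos hInc] at hg; simp at hg
      · rw [dif_neg hInc] at hg
        obtain rfl : f = e₁.1 := congrArg Subtype.val (Sum.inl_injective hg)
        exact hf
  · have hends := wit.ends₂ e e₂ hψ
    rw [cut_pair hends]
    simp only [h2]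
    constructor
    · intro h; tauto
    · rintro ⟨f, hf, hfe⟩
      have hg : g₁ wit f = .inr (.inl e₂) := by
        rw [← hψ, ← hfe, Equiv.apply_symm_apply]
      rw [g₁] at hg
      by_cases hInc : G₁.Inc f wit.v₁
      · rw [dif_pos hInc] at hg; simp at hg
      · rw [dif_neg hInc] at hg; simp at hg
  · have hends := wit.ends_cross e e₁ hψ
    rw [cut_pair hends]
    simp only [h1, h2]
    rw [iff_comm]
    constructor
    · rintro ⟨f, hf, hfe⟩
      have hg : g₁ wit f = .inr (.inr e₁) := by
        rw [← hψ, ← hfe, Equiv.apply_symm_apply]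
      rw [g₁] at hg
      by_cases hInc : G₁.Inc f wit.v₁
      · rw [dif_pos hInc] at hg
        obtain rfl : f = e₁.1 := by
          have := Sum.inr_injective (Sum.inr_injective hg)
          exact congrArg Subtype.val this
        rw [inc_cut e₁.2 (wit.noloop₁ e₁.1) S₁] at hf
        tauto
      · rw [dif_neg hInc] at hg; simp at hg
    · intro h
      refine ⟨e₁.1, ?_, ?_⟩
      · rw [inc_cut e₁.2 (wit.noloop₁ e₁.1) S₁]
        tauto
      · rw [g₁, dif_pos e₁.2, Equiv.symm_apply_eq, hψ]

end EdgeSumConstr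

end Cuts

section Cuts2

open Multigraph LinkTree

variable {V E V₁ E₁ V₂ E₂ τ₁ τ₂ : Type*}
variable {G : Multigraph V E} {G₁ : Multigraph V₁ E₁} {G₂ : Multigraph V₂ E₂} {k : ℕ}

namespace EdgeSumConstr

variable (wit : Multigraph.EdgeSumWitness G G₁ G₂ k)

lemma cut_transfer₂ (S : Set V) (S₂ : Set V₂)
    (h1 : ∀ y : {y : V₂ // y ≠ wit.v₂}, wit.φ.symm (Sum.inr y) ∈ S ↔ y.1 ∈ S₂)
    (h2 : ∀ x : {x : V₁ // x ≠ wit.v₁}, wit.φ.symm (Sum.inl x) ∈ S ↔ wit.v₂ ∈ S₂) :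
    G.cutEdges S = (fun e => wit.ψ.symm (g₂ wit e)) '' (G₂.cutEdges S₂) := by
  ext e
  rw [Set.mem_image]
  rcases hψ : wit.ψ e with e₁ | e₂ | e₁
  · have hends := wit.ends₁ e e₁ hψ
    rw [cut_pair hends]
    simp only [h2]
    constructor
    · intro h; tauto
    · rintro ⟨f, hf, hfe⟩
      have hg : g₂ wit f = .inl e₁ := by
        rw [← hψ, ← hfe, Equiv.apply_symm_apply]
      rw [g₂] at hg
      by_cases hInc : G₂.Inc f wit.v₂
      · rw [dif_pos hInc] at hg; simp at hg
      · rw [dif_neg hInc] at hg; simp at hg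
  · have hends := wit.ends₂ e e₂ hψ
    rw [cut_pair hends]
    simp only [h1]
    constructor
    · intro h
      refine ⟨e₂.1, h, ?_⟩
      rw [g₂, dif_neg e₂.2, Equiv.symm_apply_eq, hψ]
    · rintro ⟨f, hf, hfe⟩
      have hg : g₂ wit f = .inr (.inl e₂) := by
        rw [← hψ, ← hfe, Equiv.apply_symm_apply]
      rw [g₂] at hg
      by_cases hInc : G₂.Inc f wit.v₂
      · rw [dif_pos hInc] at hg; simp at hg
      · rw [dif_neg hInc] at hg
        obtain rfl : f = e₂.1 := congrArg Subtype.val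
          (Sum.inl_injective (Sum.inr_injective hg))
        exact hf
  · have hends := wit.ends_cross e e₁ hψ
    rw [cut_pair hends]
    simp only [h1, h2]
    rw [iff_comm]
    constructor
    · rintro ⟨f, hf, hfe⟩
      have hg : g₂ wit f = .inr (.inr e₁) := by
        rw [← hψ, ← hfe, Equiv.apply_symm_apply]
      rw [g₂] at hg
      by_cases hInc : G₂.Inc f wit.v₂
      · rw [dif_pos hInc] at hg
        have h' : wit.π.symm ⟨f, hInc⟩ = e₁ := by simpa using hg
        have h'' : (⟨f, hInc⟩ : {e : E₂ // G₂.Inc e wit.v₂}) = wit.π e₁ := by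
          rw [← h', Equiv.apply_symm_apply]
        obtain rfl : f = (wit.π e₁).1 := congrArg Subtype.val h''
        rw [inc_cut (wit.π e₁).2 (wit.noloop₂ (wit.π e₁).1) S₂] at hf
        tauto
      · rw [dif_neg hInc] at hg; simp at hg
    · intro h
      refine ⟨(wit.π e₁).1, ?_, ?_⟩
      · rw [inc_cut (wit.π e₁).2 (wit.noloop₂ (wit.π e₁).1) S₂]
        tauto
      · rw [g₂, dif_pos (wit.π e₁).2]
        have : wit.π.symm ⟨(wit.π e₁).1, (wit.π e₁).2⟩ = e₁ := by
          rw [show (⟨(wit.π e₁).1, (wit.π e₁).2⟩ : {e : E₂ // G₂.Inc e wit.v₂}) = wit.π e₁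
            from rfl, Equiv.symm_apply_apply]
        rw [this, Equiv.symm_apply_eq, hψ]

lemma cut_bridge_set (S : Set V)
    (h1 : ∀ x : {x : V₁ // x ≠ wit.v₁}, wit.φ.symm (Sum.inl x) ∈ S ↔ False)
    (h2 : ∀ y : {y : V₂ // y ≠ wit.v₂}, wit.φ.symm (Sum.inr y) ∈ S ↔ True) :
    G.cutEdges S =
      Set.range (fun e₁ : {e : E₁ // G₁.Inc e wit.v₁} => wit.ψ.symm (.inr (.inr e₁))) := by
  ext e
  rw [Set.mem_range]
  rcases hψ : wit.ψ e with e₁ | e₂ | e₁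
  · have hends := wit.ends₁ e e₁ hψ
    rw [cut_pair hends]
    simp only [h1]
    constructor
    · intro h; tauto
    · rintro ⟨f, hfe⟩
      have : (Sum.inr (Sum.inr f) : {e : E₁ // ¬ G₁.Inc e wit.v₁} ⊕ {e : E₂ // ¬ G₂.Inc e wit.v₂} ⊕
          {e : E₁ // G₁.Inc e wit.v₁}) = wit.ψ e := by rw [← hfe, Equiv.apply_symm_apply]
      rw [hψ] at this
      simp at this
  · have hends := wit.ends₂ e e₂ hψ
    rw [cut_pair hends]
    simp only [h2]
    constructor
    · intro h; tauto
    · rintro ⟨f, hfe⟩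
      have : (Sum.inr (Sum.inr f) : {e : E₁ // ¬ G₁.Inc e wit.v₁} ⊕ {e : E₂ // ¬ G₂.Inc e wit.v₂} ⊕
          {e : E₁ // G₁.Inc e wit.v₁}) = wit.ψ e := by rw [← hfe, Equiv.apply_symm_apply]
      rw [hψ] at this
      simp at this
  · have hends := wit.ends_cross e e₁ hψ
    rw [cut_pair hends]
    simp only [h1, h2]
    constructor
    · intro _
      exact ⟨e₁, by rw [Equiv.symm_apply_eq, hψ]⟩
    · intro _
      tauto

lemma cut_bridge_set' (S : Set V)
    (h1 : ∀ x : {x : V₁ // x ≠ wit.v₁}, wit.φ.symm (Sum.inl x) ∈ S ↔ True)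
    (h2 : ∀ y : {y : V₂ // y ≠ wit.v₂}, wit.φ.symm (Sum.inr y) ∈ S ↔ False) :
    G.cutEdges S =
      Set.range (fun e₁ : {e : E₁ // G₁.Inc e wit.v₁} => wit.ψ.symm (.inr (.inr e₁))) := by
  ext e
  rw [Set.mem_range]
  rcases hψ : wit.ψ e with e₁ | e₂ | e₁
  · have hends := wit.ends₁ e e₁ hψ
    rw [cut_pair hends]
    simp only [h1]
    constructor
    · intro h; tauto
    · rintro ⟨f, hfe⟩
      have : (Sum.inr (Sum.inr f) : {e : E₁ // ¬ G₁.Inc e wit.v₁} ⊕ {e : E₂ // ¬ G₂.Inc e wit.v₂} ⊕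
          {e : E₁ // G₁.Inc e wit.v₁}) = wit.ψ e := by rw [← hfe, Equiv.apply_symm_apply]
      rw [hψ] at this
      simp at this
  · have hends := wit.ends₂ e e₂ hψ
    rw [cut_pair hends]
    simp only [h2]
    constructor
    · intro h; tauto
    · rintro ⟨f, hfe⟩
      have : (Sum.inr (Sum.inr f) : {e : E₁ // ¬ G₁.Inc e wit.v₁} ⊕ {e : E₂ // ¬ G₂.Inc e wit.v₂} ⊕
          {e : E₁ // G₁.Inc e wit.v₁}) = wit.ψ e := by rw [← hfe, Equiv.apply_symm_apply]
      rw [hψ] at this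
      simp at this
  · have hends := wit.ends_cross e e₁ hψ
    rw [cut_pair hends]
    simp only [h1, h2]
    constructor
    · intro _
      exact ⟨e₁, by rw [Equiv.symm_apply_eq, hψ]⟩
    · intro _
      tauto

lemma ncard_cross [Fintype E₁] :
    (Set.range (fun e₁ : {e : E₁ // G₁.Inc e wit.v₁} =>
      wit.ψ.symm (.inr (.inr e₁)))).ncard = k := by
  have hinj : Function.Injective (fun e₁ : {e : E₁ // G₁.Inc e wit.v₁} =>
      wit.ψ.symm (.inr (.inr e₁))) := by
    intro a b h
    have := wit.ψ.symm.injective h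
    simpa using this
  rw [← Set.image_univ, Set.ncard_image_of_injective _ hinj, Set.ncard_univ]
  have hcard : Nat.card {e : E₁ // G₁.Inc e wit.v₁} =
      ({e : E₁ | G₁.Inc e wit.v₁} : Set E₁).ncard := Nat.card_coe_set_eq _
  rw [hcard]
  have hsplit : ({e : E₁ | G₁.Inc e wit.v₁} : Set E₁) =
      {e | G₁.src e = wit.v₁} ∪ {e | G₁.tgt e = wit.v₁} := rfl
  have hdisj : Disjoint {e : E₁ | G₁.src e = wit.v₁} {e : E₁ | G₁.tgt e = wit.v₁} := by
    rw [Set.disjoint_left]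
    intro f hs htg
    exact wit.noloop₁ f ⟨hs, htg⟩
  rw [hsplit, Set.ncard_union_eq hdisj (Set.toFinite _) (Set.toFinite _)]
  exact wit.deg₁

end EdgeSumConstr

end Cuts2

section Final

open Multigraph LinkTree

variable {V E V₁ E₁ V₂ E₂ τ₁ τ₂ : Type*}
variable {G : Multigraph V E} {G₁ : Multigraph V₁ E₁} {G₂ : Multigraph V₂ E₂} {k : ℕ}

namespace EdgeSumConstr

variable (wit : Multigraph.EdgeSumWitness G G₁ G₂ k)
  (D₁ : Multigraph.TreeCutDecomp G₁ τ₁) (D₂ : Multigraph.TreeCutDecomp G₂ τ₂)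

lemma ncard_edgeCut_inl (a b : τ₁) :
    ((Dsum wit D₁ D₂).edgeCut (.inl a) (.inl b)).ncard = (D₁.edgeCut a b).ncard := by
  have heq : (Dsum wit D₁ D₂).edgeCut (.inl a) (.inl b) =
      (fun e => wit.ψ.symm (g₁ wit e)) '' (D₁.edgeCut a b) :=
    cut_transfer₁ wit _ _ (side_inl_left wit D₁ D₂) (side_inl_right wit D₁ D₂)
  rw [heq, Set.ncard_image_of_injective _
    (fun a b h => g₁_inj wit (wit.ψ.symm.injective h))]

lemma ncard_edgeCut_inr (a b : τ₂) :
    ((Dsum wit D₁ D₂).edgeCut (.inr a) (.inr b)).ncard = (D₂.edgeCut a b).ncard := by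
  have heq : (Dsum wit D₁ D₂).edgeCut (.inr a) (.inr b) =
      (fun e => wit.ψ.symm (g₂ wit e)) '' (D₂.edgeCut a b) :=
    cut_transfer₂ wit _ _ (side_inr_right wit D₁ D₂) (side_inr_left wit D₁ D₂)
  rw [heq, Set.ncard_image_of_injective _
    (fun a b h => g₂_inj wit (wit.ψ.symm.injective h))]

lemma ncard_edgeCut_bridge [Fintype E₁] :
    ((Dsum wit D₁ D₂).edgeCut (.inl (D₁.nodeOf wit.v₁)) (.inr (D₂.nodeOf wit.v₂))).ncard
      = k := by
  have heq : (Dsum wit D₁ D₂).edgeCut (.inl (D₁.nodeOf wit.v₁)) (.inr (D₂.nodeOf wit.v₂)) =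
      Set.range (fun e₁ : {e : E₁ // G₁.Inc e wit.v₁} => wit.ψ.symm (.inr (.inr e₁))) :=
    cut_bridge_set wit _ (fun x => iff_false_intro (side_bridge_left wit D₁ D₂ x))
      (fun y => iff_true_intro (side_bridge_right wit D₁ D₂ y))
  rw [heq, ncard_cross]

lemma ncard_edgeCut_bridge' [Fintype E₁] :
    ((Dsum wit D₁ D₂).edgeCut (.inr (D₂.nodeOf wit.v₂)) (.inl (D₁.nodeOf wit.v₁))).ncard
      = k := by
  have heq : (Dsum wit D₁ D₂).edgeCut (.inr (D₂.nodeOf wit.v₂)) (.inl (D₁.nodeOf wit.v₁)) =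
      Set.range (fun e₁ : {e : E₁ // G₁.Inc e wit.v₁} => wit.ψ.symm (.inr (.inr e₁))) :=
    cut_bridge_set' wit _ (fun x => iff_true_intro (side_bridge'_left wit D₁ D₂ x))
      (fun y => iff_false_intro (side_bridge'_right wit D₁ D₂ y))
  rw [heq, ncard_cross]

lemma cut_ncard_le [Fintype E] (s : Set E) : s.ncard ≤ Nat.card E := by
  have := Set.ncard_le_ncard (Set.subset_univ s) Set.finite_univ
  rwa [Set.ncard_univ] at this

theorem adhesion_Dsum [Fintype E] [Fintype E₁] [Fintype E₂] :
    (Dsum wit D₁ D₂).adhesion = max k (max D₁.adhesion D₂.adhesion) := by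
  set nt₁ := D₁.nodeOf wit.v₁ with hnt₁
  set nt₂ := D₂.nodeOf wit.v₂ with hnt₂
  have bddA : BddAbove {n | ∃ u v, (Dsum wit D₁ D₂).tree.Adj u v ∧
      n = ((Dsum wit D₁ D₂).edgeCut u v).ncard} := by
    refine ⟨Nat.card E, ?_⟩
    rintro n ⟨u, v, -, rfl⟩
    exact cut_ncard_le _
  have bdd₁ : BddAbove {n | ∃ u v, D₁.tree.Adj u v ∧ n = (D₁.edgeCut u v).ncard} := by
    refine ⟨Nat.card E₁, ?_⟩
    rintro n ⟨u, v, -, rfl⟩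
    exact cut_ncard_le _
  have bdd₂ : BddAbove {n | ∃ u v, D₂.tree.Adj u v ∧ n = (D₂.edgeCut u v).ncard} := by
    refine ⟨Nat.card E₂, ?_⟩
    rintro n ⟨u, v, -, rfl⟩
    exact cut_ncard_le _
  have hadjbr : (Dsum wit D₁ D₂).tree.Adj (.inl nt₁) (.inr nt₂) := ⟨rfl, rfl⟩
  have hkmem : k ∈ {n | ∃ u v, (Dsum wit D₁ D₂).tree.Adj u v ∧
      n = ((Dsum wit D₁ D₂).edgeCut u v).ncard} :=
    ⟨.inl nt₁, .inr nt₂, hadjbr, (ncard_edgeCut_bridge wit D₁ D₂).symm⟩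
  apply le_antisymm
  · refine csSup_le ⟨k, hkmem⟩ ?_
    rintro n ⟨u, v, hadj, rfl⟩
    match u, v with
    | .inl a, .inl b =>
      rw [ncard_edgeCut_inl]
      have h1 : (D₁.edgeCut a b).ncard ≤ D₁.adhesion :=
        le_csSup bdd₁ ⟨a, b, hadj, rfl⟩
      exact h1.trans ((le_max_left _ _).trans (le_max_right _ _))
    | .inl a, .inr b =>
      obtain ⟨rfl, rfl⟩ : a = nt₁ ∧ b = nt₂ := hadj
      rw [ncard_edgeCut_bridge]
      exact le_max_left _ _
    | .inr a, .inl b =>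
      obtain ⟨rfl, rfl⟩ : a = nt₂ ∧ b = nt₁ := hadj
      rw [ncard_edgeCut_bridge']
      exact le_max_left _ _
    | .inr a, .inr b =>
      rw [ncard_edgeCut_inr]
      have h1 : (D₂.edgeCut a b).ncard ≤ D₂.adhesion :=
        le_csSup bdd₂ ⟨a, b, hadj, rfl⟩
      exact h1.trans ((le_max_right _ _).trans (le_max_right _ _))
  · refine max_le (le_csSup bddA hkmem) (max_le ?_ ?_)
    · by_cases hA : {n | ∃ u v, D₁.tree.Adj u v ∧ n = (D₁.edgeCut u v).ncard}.Nonempty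
      · refine csSup_le hA ?_
        rintro n ⟨a, b, hab, rfl⟩
        exact le_csSup bddA ⟨.inl a, .inl b, hab, (ncard_edgeCut_inl wit D₁ D₂ a b).symm⟩
      · rw [Set.not_nonempty_iff_eq_empty] at hA
        show sSup {n | ∃ u v, D₁.tree.Adj u v ∧ n = (D₁.edgeCut u v).ncard} ≤ _
        rw [hA, csSup_empty]
        exact bot_le
    · by_cases hA : {n | ∃ u v, D₂.tree.Adj u v ∧ n = (D₂.edgeCut u v).ncard}.Nonempty
      · refine csSup_le hA ?_
        rintro n ⟨a, b, hab, rfl⟩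
        exact le_csSup bddA ⟨.inr a, .inr b, hab, (ncard_edgeCut_inr wit D₁ D₂ a b).symm⟩
      · rw [Set.not_nonempty_iff_eq_empty] at hA
        show sSup {n | ∃ u v, D₂.tree.Adj u v ∧ n = (D₂.edgeCut u v).ncard} ≤ _
        rw [hA, csSup_empty]
        exact bot_le

end EdgeSumConstr

end Final

/-- if `G = G₁ ⊕̂_k G₂` and each `Gᵢ` has a tree-cut decomposition, then `G`
has a tree-cut decomposition whose adhesion is the maximum of `k` and the two adhesions. -/
theorem treeCutDecomp_of_edgeSum {V E V₁ E₁ V₂ E₂ : Type*} {τ₁ τ₂ : Type*}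
    [Fintype E] [Fintype E₁] [Fintype E₂] [Fintype τ₁] [Fintype τ₂]
    (G : Multigraph V E) (G₁ : Multigraph V₁ E₁) (G₂ : Multigraph V₂ E₂) (k : ℕ)
    (hsum : Multigraph.IsEdgeSum G G₁ G₂ k)
    (D₁ : Multigraph.TreeCutDecomp G₁ τ₁) (D₂ : Multigraph.TreeCutDecomp G₂ τ₂) :
    ∃ D : Multigraph.TreeCutDecomp G (τ₁ ⊕ τ₂),
      D.adhesion = max k (max D₁.adhesion D₂.adhesion) := by
  obtain ⟨wit⟩ := hsum
  exact ⟨EdgeSumConstr.Dsum wit D₁ D₂, EdgeSumConstr.adhesion_Dsum wit D₁ D₂⟩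
end
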